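/- arXiv:2103.01081 — 4 statements merged into one kernel-verified Lean document; each statement's English description precedes it below -/
import Mathlib

section
/- In the n-rank Taft algebra 𝒜̄_q(n), the antipode satisfies s(x^γ) = (-1)^{|γ|} q^{-⟨γ,γ+𝟏⟩/2} x^γ K(-γ), and consequently s²(x^γ) = q^{-|γ|} x^γ, where |γ| = Σ_i γ_i, 𝟏 = (1,…,1), and ⟨·,·⟩ is the standard symmetric bilinear form on ℤ^n. -/
open scoped TensorProduct

def starForm {n : ℕ} (α β : Fin n → ℤ) : ℤ :=
  ∑ j : Fin n, ∑ i : Fin n, if (j : ℕ) < (i : ℕ) then α i * β j else 0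

noncomputable def theta {k : Type*} [Field k] (q : k) {n : ℕ} (α β : Fin n → ℤ) : k :=
  q ^ (starForm α β - starForm β α)

def epsZ {n : ℕ} (i : Fin n) : Fin n → ℤ := fun j => if j = i then 1 else 0

/-- The ordered monomial `x^γ = x_1^{γ_1} ⋯ x_n^{γ_n}` built from a family `x`. -/
def xpow {A : Type*} [Ring A] {n : ℕ} (x : Fin n → A) (γ : Fin n → ℕ) : A :=
  ((List.finRange n).map (fun i => x i ^ γ i)).prod

/-- A presentation of the `n`-rank Taft algebra inside a Hopf algebra `A`
(generators `K(α)`, `x_i` and the defining relations, together with the values of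
the comultiplication, counit and antipode on the generators).  The scalar `t`
is the parameter used in the skew bicharacter `θ`: for the `n`-rank Taft algebra
`𝒜̄_q(n)` one takes `t = q`, while `t = 1` gives the presentation of the `n`-fold
tensor power of the Taft algebra (the rank-`n` Taft algebra `𝒜̄_q(1)^{⊗n}`). -/
structure TaftPresentation (k : Type*) [Field k] (A : Type*) [Ring A]
    [HopfAlgebra k A] (n ℓ : ℕ) (q t : k) where
  K : (Fin n → ℤ) → A
  x : Fin n → A
  K_zero : K 0 = 1
  K_add : ∀ α β, K α * K β = K (α + β)
  K_ell : ∀ i, K (epsZ i) ^ ℓ = 1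
  K_x : ∀ i j, K (epsZ i) * x j
      = (theta t (epsZ i) (epsZ j) * if i = j then q else 1) • (x j * K (epsZ i))
  x_x : ∀ i j, x i * x j = theta t (epsZ i) (epsZ j) • (x j * x i)
  x_ell : ∀ i, x i ^ ℓ = 0
  comul_K : ∀ α, Coalgebra.comul (R := k) (K α) = K α ⊗ₜ[k] K α
  comul_x : ∀ i, Coalgebra.comul (R := k) (x i) = x i ⊗ₜ[k] 1 + K (epsZ i) ⊗ₜ[k] x i
  counit_K : ∀ α, Coalgebra.counit (R := k) (K α) = 1
  counit_x : ∀ i, Coalgebra.counit (R := k) (x i) = 0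
  antipode_K : ∀ α, HopfAlgebra.antipode (R := k) (K α) = K (-α)
  antipode_x : ∀ i, HopfAlgebra.antipode (R := k) (x i) = -(K (-epsZ i) * x i)

namespace TaftPresentation

variable {k : Type*} [Field k] {A : Type*} [Ring A] [HopfAlgebra k A]
  {n ℓ : ℕ} {q t : k}

/-- The basis monomial `x^γ K(α)`. -/
def mono (T : TaftPresentation k A n ℓ q t) (γ α : Fin n → Fin ℓ) : A :=
  xpow T.x (fun i => (γ i : ℕ)) * T.K (fun i => (α i : ℤ))

end TaftPresentation


section TaftComm

/-- skew exponent -/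
def sgg {n : ℕ} (i j : Fin n) : ℤ :=
  (if (j : ℕ) < (i : ℕ) then 1 else 0) - (if (i : ℕ) < (j : ℕ) then 1 else 0)

def dd {n : ℕ} (i j : Fin n) : ℤ := sgg i j + (if i = j then 1 else 0)

variable {n : ℕ}

lemma starForm_eps (a b : Fin n) :
    starForm (epsZ a) (epsZ b) = if (b : ℕ) < (a : ℕ) then 1 else 0 := by
  unfold starForm epsZ
  have h : ∀ j i : Fin n,
      (if (j : ℕ) < (i : ℕ) then (if i = a then (1:ℤ) else 0) * (if j = b then 1 else 0) else 0)
      = if i = a then (if j = b then (if (j : ℕ) < (i : ℕ) then 1 else 0) else 0) else 0 := by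
    intro j i; split_ifs <;> simp_all
  simp_rw [h, Finset.sum_ite_eq', Finset.mem_univ, if_true]
  rw [Finset.sum_ite_eq' Finset.univ b (fun x => if (x:ℕ) < (a:ℕ) then (1:ℤ) else 0)]
  simp

lemma theta_eq {k : Type*} [Field k] (q : k) (i j : Fin n) :
    theta q (epsZ i) (epsZ j) = q ^ (sgg i j) := by
  unfold theta sgg
  rw [starForm_eps, starForm_eps]

lemma sgg_self (i : Fin n) : sgg i i = 0 := by simp [sgg]

lemma dd_self (i : Fin n) : dd i i = 1 := by simp [dd, sgg_self]

lemma sgg_of_lt {i j : Fin n} (h : i < j) : sgg j i = 1 := by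
  have h1 : (i : ℕ) < (j : ℕ) := h
  have h2 : ¬ ((j : ℕ) < (i : ℕ)) := by omega
  simp [sgg, h1, h2]

lemma dd_of_lt {i j : Fin n} (h : i < j) : dd j i = 1 := by
  have : j ≠ i := by rintro rfl; exact lt_irrefl _ h
  simp [dd, sgg_of_lt h, this]

lemma sgg_antisymm (i j : Fin n) : sgg j i = -sgg i j := by
  unfold sgg; split_ifs <;> omega

namespace TaftPresentation

variable {k : Type*} [Field k] {A : Type*} [Ring A] [HopfAlgebra k A]
  {n ℓ : ℕ} {q : k} (T : TaftPresentation k A n ℓ q q)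

lemma smul_flip (hq0 : q ≠ 0) {e : ℤ} {a b : A} (h : a = q ^ e • b) :
    b = q ^ (-e) • a := by
  rw [h, smul_smul, ← zpow_add₀ hq0, neg_add_cancel, zpow_zero, one_smul]

lemma K_mul_K_neg (α : Fin n → ℤ) : T.K α * T.K (-α) = 1 := by
  rw [T.K_add, add_neg_cancel, T.K_zero]

lemma K_neg_mul_K (α : Fin n → ℤ) : T.K (-α) * T.K α = 1 := by
  rw [T.K_add, neg_add_cancel, T.K_zero]

lemma K_x' (hq0 : q ≠ 0) (i j : Fin n) :
    T.K (epsZ i) * T.x j = q ^ (dd i j) • (T.x j * T.K (epsZ i)) := by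
  rw [T.K_x, theta_eq]
  have h : (if i = j then q else 1) = q ^ (if i = j then (1:ℤ) else 0) := by
    split_ifs <;> simp
  rw [h, ← zpow_add₀ hq0]
  rfl

lemma x_x' (i j : Fin n) : T.x i * T.x j = q ^ (sgg i j) • (T.x j * T.x i) := by
  rw [T.x_x, theta_eq]

lemma K_neg_x (hq0 : q ≠ 0) (i j : Fin n) :
    T.K (-epsZ i) * T.x j = q ^ (-(dd i j)) • (T.x j * T.K (-epsZ i)) := by
  have h : T.x j * T.K (-epsZ i) = q ^ (dd i j) • (T.K (-epsZ i) * T.x j) := by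
    calc T.x j * T.K (-epsZ i)
        = T.K (-epsZ i) * (T.K (epsZ i) * T.x j) * T.K (-epsZ i) := by
          rw [← mul_assoc (T.K (-epsZ i)), T.K_neg_mul_K, one_mul]
      _ = T.K (-epsZ i) * (q ^ (dd i j) • (T.x j * T.K (epsZ i))) * T.K (-epsZ i) := by
          rw [T.K_x' hq0]
      _ = q ^ (dd i j) • (T.K (-epsZ i) * T.x j * (T.K (epsZ i) * T.K (-epsZ i))) := by
          rw [mul_smul_comm, smul_mul_assoc]
          congr 1
          simp [mul_assoc]
      _ = q ^ (dd i j) • (T.K (-epsZ i) * T.x j) := by rw [T.K_mul_K_neg, mul_one]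
  exact smul_flip hq0 h

lemma K_zsmul_x (hq0 : q ≠ 0) (c : ℤ) (i j : Fin n) :
    T.K (c • epsZ i) * T.x j = q ^ (c * dd i j) • (T.x j * T.K (c • epsZ i)) := by
  induction c using Int.induction_on with
  | zero => simp [T.K_zero]
  | succ m ih =>
    have hsm : ((m : ℤ) + 1) • epsZ i = (m : ℤ) • epsZ i + epsZ i := by
      rw [add_smul, one_smul]
    rw [hsm, ← T.K_add]
    calc T.K ((m : ℤ) • epsZ i) * T.K (epsZ i) * T.x j
        = T.K ((m : ℤ) • epsZ i) * (T.K (epsZ i) * T.x j) := by rw [mul_assoc]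
      _ = q ^ (dd i j) • (T.K ((m : ℤ) • epsZ i) * T.x j * T.K (epsZ i)) := by
          rw [T.K_x' hq0, mul_smul_comm, mul_assoc]
      _ = (q ^ (dd i j) * q ^ ((m : ℤ) * dd i j)) •
            (T.x j * (T.K ((m : ℤ) • epsZ i) * T.K (epsZ i))) := by
          rw [ih, smul_mul_assoc, smul_smul]
          congr 1
          rw [mul_assoc]
      _ = q ^ (((m : ℤ) + 1) * dd i j) • (T.x j * (T.K ((m : ℤ) • epsZ i) * T.K (epsZ i))) := by
          have he : dd i j + (m : ℤ) * dd i j = ((m : ℤ) + 1) * dd i j := by ring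
          rw [← zpow_add₀ hq0, he]
  | pred m ih =>
    have hsm : (-(m : ℤ) - 1) • epsZ i = (-(m : ℤ)) • epsZ i + (-epsZ i) := by
      rw [sub_smul, one_smul, sub_eq_add_neg]
    rw [hsm, ← T.K_add]
    calc T.K ((-(m : ℤ)) • epsZ i) * T.K (-epsZ i) * T.x j
        = T.K ((-(m : ℤ)) • epsZ i) * (T.K (-epsZ i) * T.x j) := by rw [mul_assoc]
      _ = q ^ (-(dd i j)) • (T.K ((-(m : ℤ)) • epsZ i) * T.x j * T.K (-epsZ i)) := by
          rw [T.K_neg_x hq0, mul_smul_comm, mul_assoc]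
      _ = (q ^ (-(dd i j)) * q ^ ((-(m : ℤ)) * dd i j)) •
            (T.x j * (T.K ((-(m : ℤ)) • epsZ i) * T.K (-epsZ i))) := by
          rw [ih, smul_mul_assoc, smul_smul]
          congr 1
          rw [mul_assoc]
      _ = q ^ ((-(m : ℤ) - 1) * dd i j) • (T.x j * (T.K ((-(m : ℤ)) • epsZ i) * T.K (-epsZ i))) := by
          have he : -(dd i j) + (-(m : ℤ)) * dd i j = (-(m : ℤ) - 1) * dd i j := by ring
          rw [← zpow_add₀ hq0, he]

lemma K_zsmul_xpow (hq0 : q ≠ 0) (c : ℤ) (i j : Fin n) (m : ℕ) :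
    T.K (c • epsZ i) * T.x j ^ m = q ^ (c * m * dd i j) • (T.x j ^ m * T.K (c • epsZ i)) := by
  induction m with
  | zero => simp
  | succ m ih =>
    rw [pow_succ]
    calc T.K (c • epsZ i) * (T.x j ^ m * T.x j)
        = T.K (c • epsZ i) * T.x j ^ m * T.x j := by rw [mul_assoc]
      _ = q ^ (c * m * dd i j) • (T.x j ^ m * (T.K (c • epsZ i) * T.x j)) := by
          rw [ih, smul_mul_assoc]
          simp only [mul_assoc]
      _ = (q ^ (c * m * dd i j) * q ^ (c * dd i j)) •
            (T.x j ^ m * T.x j * T.K (c • epsZ i)) := by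
          rw [T.K_zsmul_x hq0, mul_smul_comm, smul_smul]
          simp only [mul_assoc]
      _ = q ^ (c * (m + 1 : ℕ) * dd i j) • (T.x j ^ m * T.x j * T.K (c • epsZ i)) := by
          have he : c * (m : ℤ) * dd i j + c * dd i j = c * ((m : ℕ) + 1 : ℕ) * dd i j := by
            push_cast; ring
          rw [← zpow_add₀ hq0, he]

lemma xpow_x (hq0 : q ≠ 0) (a : ℕ) (i j : Fin n) :
    T.x i ^ a * T.x j = q ^ ((a : ℤ) * sgg i j) • (T.x j * T.x i ^ a) := by
  induction a with
  | zero => simp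
  | succ a ih =>
    rw [pow_succ]
    calc T.x i ^ a * T.x i * T.x j
        = T.x i ^ a * (T.x i * T.x j) := by rw [mul_assoc]
      _ = q ^ (sgg i j) • (T.x i ^ a * T.x j * T.x i) := by
          rw [T.x_x', mul_smul_comm]
          simp only [mul_assoc]
      _ = (q ^ (sgg i j) * q ^ ((a : ℤ) * sgg i j)) • (T.x j * T.x i ^ a * T.x i) := by
          rw [ih, smul_mul_assoc, smul_smul]
      _ = q ^ (((a+1 : ℕ) : ℤ) * sgg i j) • (T.x j * (T.x i ^ a * T.x i)) := by
          have he : sgg i j + (a : ℤ) * sgg i j = ((a+1 : ℕ) : ℤ) * sgg i j := by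
            push_cast; ring
          rw [← zpow_add₀ hq0, he]
          simp only [mul_assoc]

end TaftPresentation

end TaftComm

section MoreTaft

namespace TaftPresentation

variable {k : Type*} [Field k] {A : Type*} [Ring A] [HopfAlgebra k A]
  {n ℓ : ℕ} {q : k} (T : TaftPresentation k A n ℓ q q)

lemma xpow_xpow (hq0 : q ≠ 0) (a b : ℕ) (i j : Fin n) :
    T.x i ^ a * T.x j ^ b
      = q ^ ((a : ℤ) * (b : ℤ) * sgg i j) • (T.x j ^ b * T.x i ^ a) := by
  induction b with
  | zero => simp
  | succ b ih =>
    rw [pow_succ]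
    calc T.x i ^ a * (T.x j ^ b * T.x j)
        = T.x i ^ a * T.x j ^ b * T.x j := by rw [mul_assoc]
      _ = q ^ ((a:ℤ) * (b:ℤ) * sgg i j) • (T.x j ^ b * (T.x i ^ a * T.x j)) := by
          rw [ih, smul_mul_assoc]
          simp only [mul_assoc]
      _ = (q ^ ((a:ℤ) * (b:ℤ) * sgg i j) * q ^ ((a:ℤ) * sgg i j)) •
            (T.x j ^ b * T.x j * T.x i ^ a) := by
          rw [T.xpow_x hq0, mul_smul_comm, smul_smul]
          simp only [mul_assoc]
      _ = q ^ ((a:ℤ) * ((b+1 : ℕ) : ℤ) * sgg i j) • (T.x j ^ b * T.x j * T.x i ^ a) := by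
          have he : (a:ℤ) * (b:ℤ) * sgg i j + (a:ℤ) * sgg i j
              = (a:ℤ) * ((b+1 : ℕ) : ℤ) * sgg i j := by push_cast; ring
          rw [← zpow_add₀ hq0, he]

/-- `(K(-ε_i) x_i)^m = q^(m(m-1)/2) • K(-m ε_i) x_i^m`. -/
lemma u_pow (hq0 : q ≠ 0) (i : Fin n) (m : ℕ) :
    (T.K (-epsZ i) * T.x i) ^ m
      = q ^ ((m : ℤ) * ((m : ℤ) - 1) / 2) •
          (T.K ((-(m : ℤ)) • epsZ i) * T.x i ^ m) := by
  induction m with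
  | zero => simp [T.K_zero]
  | succ m ih =>
    have hx : T.x i ^ m * T.K (-epsZ i) = q ^ (m : ℤ) • (T.K (-epsZ i) * T.x i ^ m) := by
      have h := T.K_zsmul_xpow hq0 (-1) i i m
      rw [dd_self] at h
      have h' := smul_flip hq0 h
      rw [neg_one_smul ℤ (epsZ i)] at h'
      rw [h']
      congr 1
      push_cast; ring
    rw [pow_succ, ih]
    calc (q ^ ((m : ℤ) * ((m : ℤ) - 1) / 2) • (T.K ((-(m : ℤ)) • epsZ i) * T.x i ^ m)) *
          (T.K (-epsZ i) * T.x i)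
        = q ^ ((m : ℤ) * ((m : ℤ) - 1) / 2) •
            (T.K ((-(m : ℤ)) • epsZ i) * (T.x i ^ m * T.K (-epsZ i)) * T.x i) := by
          rw [smul_mul_assoc]
          simp only [mul_assoc]
      _ = (q ^ ((m : ℤ) * ((m : ℤ) - 1) / 2) * q ^ (m : ℤ)) •
            (T.K ((-(m : ℤ)) • epsZ i) * T.K (-epsZ i) * (T.x i ^ m * T.x i)) := by
          rw [hx, mul_smul_comm, smul_mul_assoc, smul_smul]
          simp only [mul_assoc]
      _ = q ^ (((m+1 : ℕ) : ℤ) * (((m+1 : ℕ) : ℤ) - 1) / 2) •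
            (T.K ((-((m+1 : ℕ) : ℤ)) • epsZ i) * T.x i ^ (m+1)) := by
          have harg : (-(m : ℤ)) • epsZ i + (-epsZ i) = (-((m+1 : ℕ) : ℤ)) • epsZ i := by
            have : (-((m+1 : ℕ) : ℤ)) = (-(m:ℤ)) + (-1) := by push_cast; ring
            rw [this, add_smul, neg_one_smul]
          rw [T.K_add, harg, ← zpow_add₀ hq0, ← pow_succ]
          congr 2
          have h3 : Even ((m:ℤ) * ((m:ℤ) - 1)) := by
            have h4 := Int.even_mul_succ_self ((m:ℤ) - 1)
            simp only [sub_add_cancel] at h4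
            rwa [mul_comm] at h4
          obtain ⟨c, hc⟩ := h3
          have h1 : ((m+1 : ℕ) : ℤ) * (((m+1 : ℕ) : ℤ) - 1) = c + c + 2 * m := by
            push_cast
            nlinarith [hc]
          rw [hc, h1]
          omega

end TaftPresentation

end MoreTaft
open HopfAlgebra Coalgebra TensorProduct LinearMap

section Conv

variable {k : Type*} [Field k] {A : Type*} [Ring A] [HopfAlgebra k A]

/-- Convolution of two linear endomorphisms. -/
noncomputable def conv (f g : A →ₗ[k] A) : A →ₗ[k] A :=
  LinearMap.mul' k A ∘ₗ TensorProduct.map f g ∘ₗ Coalgebra.comul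

lemma conv_apply_repr (f g : A →ₗ[k] A) {a : A} {ι : Type*} (r : Coalgebra.Repr k a ι) :
    conv f g a = ∑ i ∈ r.index, f (r.left i) * g (r.right i) := by
  simp only [conv, LinearMap.comp_apply, ← r.eq, map_sum, TensorProduct.map_tmul,
    LinearMap.mul'_apply]

/-- The convolution unit. -/
noncomputable def convUnit : A →ₗ[k] A :=
  (Algebra.linearMap k A) ∘ₗ Coalgebra.counit

lemma convUnit_apply (a : A) : (convUnit (k := k)) a = algebraMap k A (Coalgebra.counit a) := rfl

lemma conv_id_antipode : conv (LinearMap.id) (antipode (R := k) (A := A)) = convUnit := by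
  ext a
  have r := Coalgebra.Repr.arbitrary k a
  rw [conv_apply_repr _ _ r, convUnit_apply]
  simpa using HopfAlgebra.sum_mul_antipode_eq_algebraMap_counit (R := k) r

lemma conv_antipode_id : conv (antipode (R := k) (A := A)) LinearMap.id = convUnit := by
  ext a
  have r := Coalgebra.Repr.arbitrary k a
  rw [conv_apply_repr _ _ r, convUnit_apply]
  simpa using HopfAlgebra.sum_antipode_mul_eq_algebraMap_counit (R := k) r

lemma convUnit_conv (f : A →ₗ[k] A) : conv convUnit f = f := by
  ext a
  have r := Coalgebra.Repr.arbitrary k a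
  rw [conv_apply_repr _ _ r]
  have h := Coalgebra.sum_counit_tmul_eq (R := k) r
  have h2 := congrArg (TensorProduct.lid k A) h
  simp only [map_sum, TensorProduct.lid_tmul] at h2
  calc ∑ i ∈ r.index, convUnit (r.left i) * f (r.right i)
      = ∑ i ∈ r.index, Coalgebra.counit (R := k) (r.left i) • f (r.right i) := by
        refine Finset.sum_congr rfl fun i _ => ?_
        rw [convUnit_apply, Algebra.smul_def]
    _ = f (∑ i ∈ r.index, Coalgebra.counit (R := k) (r.left i) • r.right i) := by
        rw [map_sum]; refine Finset.sum_congr rfl fun i _ => ?_; rw [map_smul]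
    _ = f a := by rw [h2]; simp

lemma conv_convUnit (f : A →ₗ[k] A) : conv f convUnit = f := by
  ext a
  have r := Coalgebra.Repr.arbitrary k a
  rw [conv_apply_repr _ _ r]
  have h := Coalgebra.sum_tmul_counit_eq (R := k) r
  have h2 := congrArg (TensorProduct.rid k A) h
  simp only [map_sum, TensorProduct.rid_tmul] at h2
  calc ∑ i ∈ r.index, f (r.left i) * convUnit (r.right i)
      = ∑ i ∈ r.index, Coalgebra.counit (R := k) (r.right i) • f (r.left i) := by
        refine Finset.sum_congr rfl fun i _ => ?_
        rw [convUnit_apply, ← Algebra.commutes, ← Algebra.smul_def]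
    _ = f (∑ i ∈ r.index, Coalgebra.counit (R := k) (r.right i) • r.left i) := by
        rw [map_sum]; refine Finset.sum_congr rfl fun i _ => ?_; rw [map_smul]
    _ = f a := by rw [h2]; simp

lemma conv_assoc (f g h : A →ₗ[k] A) : conv (conv f g) h = conv f (conv g h) := by
  ext a
  set Φ : (A ⊗[k] A) ⊗[k] A →ₗ[k] A :=
    LinearMap.mul' k A ∘ₗ (LinearMap.mul' k A).rTensor A ∘ₗ
      TensorProduct.map (TensorProduct.map f g) h with hΦ
  set Ψ : A ⊗[k] (A ⊗[k] A) →ₗ[k] A :=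
    LinearMap.mul' k A ∘ₗ (LinearMap.mul' k A).lTensor A ∘ₗ
      TensorProduct.map f (TensorProduct.map g h) with hΨ
  have hΦΨ : ∀ y : (A ⊗[k] A) ⊗[k] A, Φ y = Ψ (TensorProduct.assoc k A A A y) := by
    intro y
    have : Φ = Ψ ∘ₗ (TensorProduct.assoc k A A A).toLinearMap := by
      apply TensorProduct.ext
      apply TensorProduct.ext
      ext a b c
      simp [hΦ, hΨ, mul_assoc]
    rw [this]; rfl
  have key1 : conv (conv f g) h a = Φ ((Coalgebra.comul (R := k)).rTensor A (Coalgebra.comul a)) := by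
    have r := Coalgebra.Repr.arbitrary k a
    rw [conv_apply_repr _ _ r, ← r.eq, map_sum]
    simp only [LinearMap.rTensor_tmul, hΦ, LinearMap.comp_apply, map_sum,
      TensorProduct.map_tmul, LinearMap.mul'_apply]
    refine Finset.sum_congr rfl fun i _ => ?_
    have ri := Coalgebra.Repr.arbitrary k (r.left i)
    rw [conv_apply_repr _ _ ri, ← ri.eq]
    simp [Finset.sum_mul]
  have key2 : conv f (conv g h) a = Ψ ((Coalgebra.comul (R := k)).lTensor A (Coalgebra.comul a)) := by
    have r := Coalgebra.Repr.arbitrary k a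
    rw [conv_apply_repr _ _ r, ← r.eq, map_sum]
    simp only [LinearMap.lTensor_tmul, hΨ, LinearMap.comp_apply, map_sum,
      TensorProduct.map_tmul, LinearMap.mul'_apply]
    refine Finset.sum_congr rfl fun i _ => ?_
    have ri := Coalgebra.Repr.arbitrary k (r.right i)
    rw [conv_apply_repr _ _ ri, ← ri.eq]
    simp [Finset.mul_sum]
  rw [key1, key2, hΦΨ, Coalgebra.coassoc_apply]

lemma conv_unique {f₁ f₂ f₃ : A →ₗ[k] A} (h12 : conv f₁ f₂ = convUnit)
    (h23 : conv f₂ f₃ = convUnit) : f₁ = f₃ := by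
  have : conv f₁ (conv f₂ f₃) = conv (conv f₁ f₂) f₃ := (conv_assoc f₁ f₂ f₃).symm
  rw [h12, h23, conv_convUnit, convUnit_conv] at this
  exact this

end Conv

section Peel

variable {k : Type*} [Field k] {A : Type*} [Ring A] [HopfAlgebra k A]

lemma antipode_one' : antipode (R := k) (A := A) 1 = 1 := by
  have := HopfAlgebra.mul_antipode_rTensor_comul_apply (R := k) (A := A) (a := 1)
  rw [Bialgebra.comul_one, Algebra.TensorProduct.one_def] at this
  simpa using this

/-- Peel a group-like factor from the left. -/
lemma antipode_grouplike_mul {g g' : A}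
    (hg : Coalgebra.comul (R := k) g = g ⊗ₜ[k] g) (hε : Coalgebra.counit (R := k) g = 1)
    (h1 : g * g' = 1) (h2 : g' * g = 1) (a : A) :
    antipode (R := k) (g * a) = antipode (R := k) a * g' := by
  set f₁ : A →ₗ[k] A := (antipode (R := k) (A := A)) ∘ₗ LinearMap.mulLeft k g with hf₁
  set f₂ : A →ₗ[k] A := LinearMap.mulLeft k g with hf₂
  set f₃ : A →ₗ[k] A := (LinearMap.mulRight k g') ∘ₗ (antipode (R := k) (A := A)) with hf₃
  have h12 : conv f₁ f₂ = convUnit := by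
    ext b
    have r := Coalgebra.Repr.arbitrary k b
    let r' : Coalgebra.Repr k (g * b) (A × A) :=
      { index := r.index, left := fun i => g * r.left i, right := fun i => g * r.right i,
        eq := by
          rw [Bialgebra.comul_mul, hg, ← r.eq, Finset.mul_sum]
          simp [Algebra.TensorProduct.tmul_mul_tmul] }
    have := HopfAlgebra.sum_antipode_mul_eq_algebraMap_counit (R := k) r'
    rw [conv_apply_repr _ _ r, convUnit_apply]
    simp only [hf₁, hf₂, LinearMap.comp_apply, LinearMap.mulLeft_apply]
    rw [show ∑ i ∈ r.index, antipode (R := k) (g * r.left i) * (g * r.right i)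
        = ∑ i ∈ r'.index, antipode (R := k) (r'.left i) * r'.right i from rfl, this]
    simp [r', Bialgebra.counit_mul, hε]
  have h23 : conv f₂ f₃ = convUnit := by
    ext b
    have r := Coalgebra.Repr.arbitrary k b
    rw [conv_apply_repr _ _ r, convUnit_apply]
    simp only [hf₂, hf₃, LinearMap.comp_apply, LinearMap.mulLeft_apply,
      LinearMap.mulRight_apply]
    calc ∑ i ∈ r.index, g * r.left i * (antipode (R := k) (r.right i) * g')
        = g * (∑ i ∈ r.index, r.left i * antipode (R := k) (r.right i)) * g' := by
          rw [Finset.mul_sum, Finset.sum_mul]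
          refine Finset.sum_congr rfl fun i _ => ?_
          simp [mul_assoc]
      _ = algebraMap k A (Coalgebra.counit b) := by
          rw [HopfAlgebra.sum_mul_antipode_eq_algebraMap_counit (R := k) r, ← Algebra.commutes]
          rw [mul_assoc, h1, mul_one]
  have := conv_unique h12 h23
  have := congrFun (congrArg DFunLike.coe this) a
  simpa [hf₁, hf₂, hf₃] using this

/-- Peel a group-like factor from the right. -/
lemma antipode_mul_grouplike {g g' : A}
    (hg : Coalgebra.comul (R := k) g = g ⊗ₜ[k] g) (hε : Coalgebra.counit (R := k) g = 1)
    (h1 : g * g' = 1) (h2 : g' * g = 1) (a : A) :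
    antipode (R := k) (a * g) = g' * antipode (R := k) a := by
  set f₁ : A →ₗ[k] A := (antipode (R := k) (A := A)) ∘ₗ LinearMap.mulRight k g with hf₁
  set f₂ : A →ₗ[k] A := LinearMap.mulRight k g with hf₂
  set f₃ : A →ₗ[k] A := (LinearMap.mulLeft k g') ∘ₗ (antipode (R := k) (A := A)) with hf₃
  have h12 : conv f₁ f₂ = convUnit := by
    ext b
    have r := Coalgebra.Repr.arbitrary k b
    let r' : Coalgebra.Repr k (b * g) (A × A) :=
      { index := r.index, left := fun i => r.left i * g, right := fun i => r.right i * g,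
        eq := by
          rw [Bialgebra.comul_mul, hg, ← r.eq, Finset.sum_mul]
          simp [Algebra.TensorProduct.tmul_mul_tmul] }
    have := HopfAlgebra.sum_antipode_mul_eq_algebraMap_counit (R := k) r'
    rw [conv_apply_repr _ _ r, convUnit_apply]
    simp only [hf₁, hf₂, LinearMap.comp_apply, LinearMap.mulRight_apply]
    rw [show ∑ i ∈ r.index, antipode (R := k) (r.left i * g) * (r.right i * g)
        = ∑ i ∈ r'.index, antipode (R := k) (r'.left i) * r'.right i from rfl, this]
    simp [r', Bialgebra.counit_mul, hε]
  have h23 : conv f₂ f₃ = convUnit := by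
    ext b
    have r := Coalgebra.Repr.arbitrary k b
    rw [conv_apply_repr _ _ r, convUnit_apply]
    simp only [hf₂, hf₃, LinearMap.comp_apply, LinearMap.mulLeft_apply,
      LinearMap.mulRight_apply]
    calc ∑ i ∈ r.index, r.left i * g * (g' * antipode (R := k) (r.right i))
        = ∑ i ∈ r.index, r.left i * antipode (R := k) (r.right i) := by
          refine Finset.sum_congr rfl fun i _ => ?_
          rw [mul_assoc, ← mul_assoc g g', h1, one_mul]
      _ = algebraMap k A (Coalgebra.counit b) := HopfAlgebra.sum_mul_antipode_eq_algebraMap_counit (R := k) r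
  have := conv_unique h12 h23
  have := congrFun (congrArg DFunLike.coe this) a
  simpa [hf₁, hf₂, hf₃] using this

/-- Peel a skew-primitive factor from the left. -/
lemma antipode_skew_mul {x g : A}
    (hx : Coalgebra.comul (R := k) x = x ⊗ₜ[k] 1 + g ⊗ₜ[k] x)
    (hεx : Coalgebra.counit (R := k) x = 0) (a : A) :
    antipode (R := k) (x * a) = -(antipode (R := k) (g * a) * x) := by
  set s := antipode (R := k) (A := A) with hs
  set u : A →ₗ[k] A := s ∘ₗ LinearMap.mulLeft k x with hu
  set v : A →ₗ[k] A := s ∘ₗ LinearMap.mulLeft k g with hv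
  set Lx : A →ₗ[k] A := LinearMap.mulLeft k x with hLx
  set ex : A →ₗ[k] A := (Coalgebra.counit (R := k) (A := A)).smulRight x with hex
  -- Step 1 : conv u id = - conv v Lx
  have step1 : conv u LinearMap.id = - conv v Lx := by
    ext b
    have r := Coalgebra.Repr.arbitrary k b
    let r' : Coalgebra.Repr k (x * b) ((A × A) ⊕ (A × A)) :=
      { index := r.index.disjSum r.index,
        left := Sum.elim (fun i => x * r.left i) (fun i => g * r.left i),
        right := Sum.elim (fun i => r.right i) (fun i => x * r.right i),
        eq := by
          rw [Finset.sum_disjSum, Bialgebra.comul_mul, hx, ← r.eq, add_mul,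
            Finset.mul_sum, Finset.mul_sum]
          simp [Algebra.TensorProduct.tmul_mul_tmul] }
    have h0 := HopfAlgebra.sum_antipode_mul_eq_algebraMap_counit (R := k) r'
    rw [show (Coalgebra.counit (R := k) (x * b)) = 0 by
      rw [Bialgebra.counit_mul, hεx, zero_mul], map_zero] at h0
    rw [Finset.sum_disjSum] at h0
    have := eq_neg_of_add_eq_zero_left h0
    rw [LinearMap.neg_apply, conv_apply_repr _ _ r, conv_apply_repr _ _ r]
    simp only [hu, hv, hLx, LinearMap.comp_apply, LinearMap.mulLeft_apply, LinearMap.id_apply]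
    exact this
  -- Step 2 : conv Lx s = ex
  have step2 : conv Lx s = ex := by
    ext b
    have r := Coalgebra.Repr.arbitrary k b
    rw [conv_apply_repr _ _ r]
    simp only [hLx, hex, LinearMap.mulLeft_apply, LinearMap.smulRight_apply]
    calc ∑ i ∈ r.index, x * r.left i * s (r.right i)
        = x * ∑ i ∈ r.index, r.left i * s (r.right i) := by
          rw [Finset.mul_sum]; refine Finset.sum_congr rfl fun i _ => mul_assoc _ _ _
      _ = Coalgebra.counit (R := k) b • x := by
          rw [hs, HopfAlgebra.sum_mul_antipode_eq_smul (R := k) r, mul_smul_comm, mul_one]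
  -- Step 3 : conv v ex = (fun a => s (g * a) * x)
  have step3 : ∀ b, conv v ex b = s (g * b) * x := by
    intro b
    have r := Coalgebra.Repr.arbitrary k b
    rw [conv_apply_repr _ _ r]
    simp only [hv, hex, LinearMap.comp_apply, LinearMap.mulLeft_apply,
      LinearMap.smulRight_apply]
    have h := Coalgebra.sum_tmul_counit_eq (R := k) r
    have h2 := congrArg (TensorProduct.rid k A) h
    simp only [map_sum, TensorProduct.rid_tmul] at h2
    calc ∑ i ∈ r.index, s (g * r.left i) * (Coalgebra.counit (R := k) (r.right i) • x)
        = (∑ i ∈ r.index, Coalgebra.counit (R := k) (r.right i) • s (g * r.left i)) * x := by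
          rw [Finset.sum_mul]
          refine Finset.sum_congr rfl fun i _ => ?_
          rw [mul_smul_comm, smul_mul_assoc]
      _ = s (g * b) * x := by
          rw [show (∑ i ∈ r.index, Coalgebra.counit (R := k) (r.right i) • s (g * r.left i))
              = s (g * ∑ i ∈ r.index, Coalgebra.counit (R := k) (r.right i) • r.left i) by
            rw [Finset.mul_sum, map_sum]
            refine Finset.sum_congr rfl fun i _ => ?_
            rw [mul_smul_comm, map_smul]]
          rw [h2]; simp
  -- assemble : u = conv (conv u id) s = conv u (conv id s) = u ; and
  -- u = conv (- conv v Lx) s = - conv v (conv Lx s) = - conv v ex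
  have hid : conv LinearMap.id s = convUnit := conv_id_antipode
  have hu2 : u = conv (conv u LinearMap.id) s := by
    rw [conv_assoc, hid, conv_convUnit]
  have hneg : conv (- conv v Lx) s = - conv (conv v Lx) s := by
    ext b
    have r := Coalgebra.Repr.arbitrary k b
    rw [LinearMap.neg_apply, conv_apply_repr _ _ r, conv_apply_repr _ _ r]
    simp [← Finset.sum_neg_distrib]
  have : u = - conv v ex := by
    rw [hu2, step1, hneg, conv_assoc, step2]
  have := congrFun (congrArg DFunLike.coe this) a
  rw [LinearMap.neg_apply] at this
  rw [hu, LinearMap.comp_apply, LinearMap.mulLeft_apply] at this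
  rw [this, step3]

end Peel

section TaftAntipode

open HopfAlgebra

namespace TaftPresentation

variable {k : Type*} [Field k] {A : Type*} [Ring A] [HopfAlgebra k A]
  {n ℓ : ℕ} {q : k} (T : TaftPresentation k A n ℓ q q)

lemma antipode_K_mul (α : Fin n → ℤ) (a : A) :
    antipode (R := k) (T.K α * a) = antipode (R := k) a * T.K (-α) :=
  antipode_grouplike_mul (T.comul_K α) (T.counit_K α) (T.K_mul_K_neg α) (T.K_neg_mul_K α) a

lemma antipode_mul_K (α : Fin n → ℤ) (a : A) :
    antipode (R := k) (a * T.K α) = T.K (-α) * antipode (R := k) a :=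
  antipode_mul_grouplike (T.comul_K α) (T.counit_K α) (T.K_mul_K_neg α) (T.K_neg_mul_K α) a

lemma antipode_x_mul (i : Fin n) (a : A) :
    antipode (R := k) (T.x i * a)
      = antipode (R := k) a * (-(T.K (-epsZ i) * T.x i)) := by
  rw [antipode_skew_mul (T.comul_x i) (T.counit_x i) a, T.antipode_K_mul, mul_assoc, mul_neg]

lemma antipode_xpow_mul (i : Fin n) (m : ℕ) (a : A) :
    antipode (R := k) (T.x i ^ m * a)
      = antipode (R := k) a * (-(T.K (-epsZ i) * T.x i)) ^ m := by
  induction m with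
  | zero => simp
  | succ m ih =>
    rw [pow_succ', mul_assoc, T.antipode_x_mul, ih, pow_succ, mul_assoc]

lemma antipode_xpow (hq0 : q ≠ 0) (i : Fin n) (m : ℕ) :
    antipode (R := k) (T.x i ^ m)
      = ((-1:k) ^ m * q ^ ((m : ℤ) * ((m : ℤ) - 1) / 2)) •
          (T.K ((-(m : ℤ)) • epsZ i) * T.x i ^ m) := by
  have h := T.antipode_xpow_mul i m 1
  rw [mul_one] at h
  rw [h, antipode_one', one_mul]
  have hneg : (-(T.K (-epsZ i) * T.x i)) = (-1 : k) • (T.K (-epsZ i) * T.x i) := by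
    rw [neg_one_smul]
  rw [hneg, smul_pow, T.u_pow hq0, smul_smul]

/-- word product -/
def wp (γ : Fin n → ℕ) (l : List (Fin n)) : A := (l.map (fun i => T.x i ^ γ i)).prod

def af (γ : Fin n → ℕ) (l : List (Fin n)) : Fin n → ℤ :=
  fun j => if j ∈ l then -(γ j : ℤ) else 0

def pf (γ : Fin n → ℕ) (l : List (Fin n)) : Fin n → ℤ :=
  fun j => if j ∈ l then (γ j : ℤ) else 0

variable (γ : Fin n → ℕ)

lemma wp_nil : T.wp γ [] = 1 := rfl

lemma wp_cons (i : Fin n) (l : List (Fin n)) :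
    T.wp γ (i :: l) = T.x i ^ γ i * T.wp γ l := by simp [wp]

lemma af_nil : af (n := n) γ [] = 0 := by funext j; simp [af]

lemma pf_nil : pf (n := n) γ [] = 0 := by funext j; simp [pf]

lemma af_cons {i : Fin n} {l : List (Fin n)} (hi : i ∉ l) :
    af γ (i :: l) = (-(γ i : ℤ)) • epsZ i + af γ l := by
  funext j
  by_cases hj : j = i
  · subst hj
    simp [af, epsZ, hi]
  · simp [af, epsZ, hj, List.mem_cons]

lemma pf_cons {i : Fin n} {l : List (Fin n)} (hi : i ∉ l) :
    pf γ (i :: l) = ((γ i : ℤ)) • epsZ i + pf γ l := by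
  funext j
  by_cases hj : j = i
  · subst hj
    simp [pf, epsZ, hi]
  · simp [pf, epsZ, hj, List.mem_cons]

lemma K_af_xpow (hq0 : q ≠ 0) (i : Fin n) (m : ℕ) (l : List (Fin n))
    (hgt : ∀ j ∈ l, i < j) (hnd : l.Pairwise (· < ·)) :
    T.K (af γ l) * T.x i ^ m
      = q ^ (-(m : ℤ) * ((l.map (fun j => (γ j : ℤ))).sum)) •
          (T.x i ^ m * T.K (af γ l)) := by
  induction l with
  | nil => simp [af_nil, T.K_zero]
  | cons j l' ih =>
    have hj : j ∉ l' := fun h => absurd (List.rel_of_pairwise_cons hnd h) (lt_irrefl j)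
    have hij : i < j := hgt j (List.mem_cons_self (a := j) (l := l'))
    have h1 := T.K_zsmul_xpow hq0 (-(γ j : ℤ)) j i m
    rw [dd_of_lt hij, mul_one] at h1
    have h2 := ih (fun b hb => hgt b (List.mem_cons_of_mem j hb))
      (List.pairwise_cons.mp hnd).2
    rw [af_cons γ hj, ← T.K_add]
    calc T.K ((-(γ j : ℤ)) • epsZ j) * T.K (af γ l') * T.x i ^ m
        = T.K ((-(γ j : ℤ)) • epsZ j) * (T.K (af γ l') * T.x i ^ m) := by rw [mul_assoc]
      _ = q ^ (-(m : ℤ) * ((l'.map (fun j => (γ j : ℤ))).sum)) •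
            (T.K ((-(γ j : ℤ)) • epsZ j) * T.x i ^ m * T.K (af γ l')) := by
          rw [h2, mul_smul_comm]
          simp only [mul_assoc]
      _ = (q ^ (-(m : ℤ) * ((l'.map (fun j => (γ j : ℤ))).sum)) * q ^ (-(γ j : ℤ) * (m : ℤ))) •
            (T.x i ^ m * (T.K ((-(γ j : ℤ)) • epsZ j) * T.K (af γ l'))) := by
          rw [h1, smul_mul_assoc, smul_smul]
          simp only [mul_assoc]
      _ = q ^ (-(m : ℤ) * (((j :: l').map (fun j => (γ j : ℤ))).sum)) •
            (T.x i ^ m * (T.K ((-(γ j : ℤ)) • epsZ j) * T.K (af γ l'))) := by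
          rw [← zpow_add₀ hq0]
          congr 2
          simp only [List.map_cons, List.sum_cons]
          ring

lemma K_pf_xpow (hq0 : q ≠ 0) (i : Fin n) (m : ℕ) (l : List (Fin n))
    (hnd : l.Nodup) :
    T.K (pf γ l) * T.x i ^ m
      = q ^ ((m : ℤ) * ((l.map (fun j => (γ j : ℤ) * dd j i)).sum)) •
          (T.x i ^ m * T.K (pf γ l)) := by
  induction l with
  | nil => simp [pf_nil, T.K_zero]
  | cons j l' ih =>
    have hj : j ∉ l' := (List.nodup_cons.mp hnd).1
    have h1 := T.K_zsmul_xpow hq0 ((γ j : ℤ)) j i m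
    have h2 := ih (List.nodup_cons.mp hnd).2
    rw [pf_cons γ hj, ← T.K_add]
    calc T.K (((γ j : ℤ)) • epsZ j) * T.K (pf γ l') * T.x i ^ m
        = T.K (((γ j : ℤ)) • epsZ j) * (T.K (pf γ l') * T.x i ^ m) := by rw [mul_assoc]
      _ = q ^ ((m : ℤ) * ((l'.map (fun j => (γ j : ℤ) * dd j i)).sum)) •
            (T.K (((γ j : ℤ)) • epsZ j) * T.x i ^ m * T.K (pf γ l')) := by
          rw [h2, mul_smul_comm]
          simp only [mul_assoc]
      _ = (q ^ ((m : ℤ) * ((l'.map (fun j => (γ j : ℤ) * dd j i)).sum)) *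
              q ^ ((γ j : ℤ) * (m : ℤ) * dd j i)) •
            (T.x i ^ m * (T.K (((γ j : ℤ)) • epsZ j) * T.K (pf γ l'))) := by
          rw [h1, smul_mul_assoc, smul_smul]
          simp only [mul_assoc]
      _ = q ^ ((m : ℤ) * (((j :: l').map (fun j => (γ j : ℤ) * dd j i)).sum)) •
            (T.x i ^ m * (T.K (((γ j : ℤ)) • epsZ j) * T.K (pf γ l'))) := by
          rw [← zpow_add₀ hq0]
          congr 2
          simp only [List.map_cons, List.sum_cons]
          ring

lemma wp_xpow_swap (hq0 : q ≠ 0) (i : Fin n) (m : ℕ) (l : List (Fin n))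
    (hgt : ∀ j ∈ l, i < j) :
    T.wp γ l * T.x i ^ m
      = q ^ ((m : ℤ) * ((l.map (fun j => (γ j : ℤ))).sum)) • (T.x i ^ m * T.wp γ l) := by
  induction l with
  | nil => simp [wp_nil]
  | cons j l' ih =>
    have hij : i < j := hgt j (List.mem_cons_self (a := j) (l := l'))
    have h1 := T.xpow_xpow hq0 (γ j) m j i
    rw [sgg_of_lt hij, mul_one] at h1
    have h2 := ih (fun b hb => hgt b (List.mem_cons_of_mem j hb))
    rw [T.wp_cons]
    calc T.x j ^ γ j * T.wp γ l' * T.x i ^ m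
        = T.x j ^ γ j * (T.wp γ l' * T.x i ^ m) := by rw [mul_assoc]
      _ = q ^ ((m : ℤ) * ((l'.map (fun j => (γ j : ℤ))).sum)) •
            (T.x j ^ γ j * T.x i ^ m * T.wp γ l') := by
          rw [h2, mul_smul_comm]
          simp only [mul_assoc]
      _ = (q ^ ((m : ℤ) * ((l'.map (fun j => (γ j : ℤ))).sum)) * q ^ ((γ j : ℤ) * (m : ℤ))) •
            (T.x i ^ m * (T.x j ^ γ j * T.wp γ l')) := by
          rw [h1, smul_mul_assoc, smul_smul]
          simp only [mul_assoc]
      _ = q ^ ((m : ℤ) * (((j :: l').map (fun j => (γ j : ℤ))).sum)) •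
            (T.x i ^ m * (T.x j ^ γ j * T.wp γ l')) := by
          rw [← zpow_add₀ hq0]
          congr 2
          simp only [List.map_cons, List.sum_cons]
          ring
      _ = q ^ ((m : ℤ) * (((j :: l').map (fun j => (γ j : ℤ))).sum)) •
            (T.x i ^ m * T.wp γ (j :: l')) := by rw [T.wp_cons]

lemma K_pf_wp (hq0 : q ≠ 0) (L : List (Fin n)) (hL : L.Nodup) (l : List (Fin n)) :
    T.K (pf γ L) * T.wp γ l
      = q ^ ((l.map (fun i => (γ i : ℤ) * ((L.map (fun j => (γ j : ℤ) * dd j i)).sum))).sum) •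
          (T.wp γ l * T.K (pf γ L)) := by
  induction l with
  | nil => simp [wp_nil]
  | cons i l' ih =>
    have h1 := T.K_pf_xpow γ hq0 i (γ i) L hL
    rw [T.wp_cons]
    calc T.K (pf γ L) * (T.x i ^ γ i * T.wp γ l')
        = T.K (pf γ L) * T.x i ^ γ i * T.wp γ l' := by rw [mul_assoc]
      _ = q ^ ((γ i : ℤ) * ((L.map (fun j => (γ j : ℤ) * dd j i)).sum)) •
            (T.x i ^ γ i * (T.K (pf γ L) * T.wp γ l')) := by
          rw [h1, smul_mul_assoc]
          simp only [mul_assoc]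
      _ = (q ^ ((γ i : ℤ) * ((L.map (fun j => (γ j : ℤ) * dd j i)).sum)) *
            q ^ ((l'.map (fun i => (γ i : ℤ) * ((L.map (fun j => (γ j : ℤ) * dd j i)).sum))).sum)) •
            (T.x i ^ γ i * T.wp γ l' * T.K (pf γ L)) := by
          rw [ih, mul_smul_comm, smul_smul]
          simp only [mul_assoc]
      _ = q ^ (((i :: l').map
              (fun i => (γ i : ℤ) * ((L.map (fun j => (γ j : ℤ) * dd j i)).sum))).sum) •
            (T.x i ^ γ i * T.wp γ l' * T.K (pf γ L)) := by
          rw [← zpow_add₀ hq0]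
          try congr 2
          try simp only [List.map_cons, List.sum_cons]
          try ring
      _ = q ^ (((i :: l').map
              (fun i => (γ i : ℤ) * ((L.map (fun j => (γ j : ℤ) * dd j i)).sum))).sum) •
            (T.wp γ (i :: l') * T.K (pf γ L)) := by rw [T.wp_cons]

end TaftPresentation

end TaftAntipode

section KeyLemma

open HopfAlgebra

lemma quad_arith (m : ℤ) : m * (m - 1) / 2 + -m * m = -(m * (m + 1) / 2) := by
  obtain ⟨c, hc⟩ : Even (m * (m - 1)) := by
    have h4 := Int.even_mul_succ_self (m - 1)
    simp only [sub_add_cancel] at h4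
    rwa [mul_comm] at h4
  have h1 : m * (m + 1) = c + c + 2 * m := by nlinarith [hc]
  have h2 : -m * m = -(c + c) - m := by nlinarith [hc]
  rw [hc, h1, h2]
  omega

namespace TaftPresentation

variable {k : Type*} [Field k] {A : Type*} [Ring A] [HopfAlgebra k A]
  {n ℓ : ℕ} {q : k} (T : TaftPresentation k A n ℓ q q)

lemma swap_assoc {e : ℤ} {a b : A} (h : a * b = q ^ e • (b * a)) (z : A) :
    a * (b * z) = q ^ e • (b * (a * z)) := by
  rw [← mul_assoc, h, smul_mul_assoc, mul_assoc]

lemma key (hq0 : q ≠ 0) (γ : Fin n → ℕ) (l : List (Fin n)) (hl : l.Pairwise (· < ·)) :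
    antipode (R := k) (T.wp γ l)
      = (((-1 : k) ^ ((l.map γ).sum)) *
          q ^ ((l.map (fun i => -((γ i : ℤ) * ((γ i : ℤ) + 1) / 2))).sum)) •
        (T.wp γ l * T.K (af γ l)) := by
  induction l with
  | nil => simp [wp_nil, af_nil, T.K_zero, antipode_one']
  | cons i l' ih =>
    have hgt : ∀ j ∈ l', i < j := (List.pairwise_cons.mp hl).1
    have hl' := (List.pairwise_cons.mp hl).2
    have hi : i ∉ l' := fun h => absurd (hgt i h) (lt_irrefl i)
    set m : ℕ := γ i with hm
    set S' : ℤ := (l'.map (fun j => (γ j : ℤ))).sum with hS'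
    set E' : ℤ := (l'.map (fun i => -((γ i : ℤ) * ((γ i : ℤ) + 1) / 2))).sum with hE'
    set N' : ℕ := (l'.map γ).sum with hN'
    have hu : (-(T.K (-epsZ i) * T.x i)) ^ m
        = ((-1 : k) ^ m * q ^ ((m : ℤ) * ((m : ℤ) - 1) / 2)) •
            (T.K ((-(m : ℤ)) • epsZ i) * T.x i ^ m) := by
      rw [show (-(T.K (-epsZ i) * T.x i)) = (-1 : k) • (T.K (-epsZ i) * T.x i) from by
        rw [neg_one_smul], smul_pow, T.u_pow hq0, smul_smul]
    have s1 : T.K ((-(m : ℤ)) • epsZ i) * T.x i ^ m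
        = q ^ (-(m : ℤ) * (m : ℤ)) • (T.x i ^ m * T.K ((-(m : ℤ)) • epsZ i)) := by
      have h := T.K_zsmul_xpow hq0 (-(m : ℤ)) i i m
      rw [dd_self, mul_one] at h
      exact h
    have s2 := T.K_af_xpow γ hq0 i m l' hgt hl'
    have s3 := T.wp_xpow_swap γ hq0 i m l' hgt
    rw [← hS'] at s2 s3
    -- the element-level computation
    have hElem : T.wp γ l' * T.K (af γ l') * (T.K ((-(m : ℤ)) • epsZ i) * T.x i ^ m)
        = q ^ (-(m : ℤ) * (m : ℤ)) • (T.wp γ (i :: l') * T.K (af γ (i :: l'))) := by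
      have haf : af γ l' + (-(m : ℤ)) • epsZ i = af γ (i :: l') := by
        rw [af_cons γ hi, add_comm]
      conv_rhs => rw [T.wp_cons]
      simp only [mul_assoc]
      rw [s1]
      simp only [mul_smul_comm]
      rw [swap_assoc s2]
      simp only [mul_smul_comm, smul_smul]
      rw [swap_assoc s3]
      simp only [mul_smul_comm, smul_smul]
      rw [T.K_add, haf]
      congr 1
      rw [← zpow_add₀ hq0, ← zpow_add₀ hq0]
      congr 1
      ring
    conv_lhs => rw [T.wp_cons]
    rw [T.antipode_xpow_mul, ih hl', hu, smul_mul_assoc, mul_smul_comm, smul_smul,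
      hElem, smul_smul]
    congr 1
    have hsum1 : ((i :: l').map γ).sum = m + N' := by simp [hN', hm]
    have hsum2 : ((i :: l').map (fun i => -((γ i : ℤ) * ((γ i : ℤ) + 1) / 2))).sum
        = -((m : ℤ) * ((m : ℤ) + 1) / 2) + E' := by simp [hE', hm]
    have hqq : q ^ (-((m : ℤ) * ((m : ℤ) + 1) / 2) + E')
        = q ^ E' * q ^ ((m : ℤ) * ((m : ℤ) - 1) / 2) * q ^ (-(m : ℤ) * (m : ℤ)) := by
      rw [← zpow_add₀ hq0, ← zpow_add₀ hq0]
      congr 1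
      rw [add_assoc, quad_arith]
      ring
    rw [hsum1, hsum2, pow_add, hqq]
    ring

end TaftPresentation

end KeyLemma

section Final

open HopfAlgebra

/-- the antipode formula in the `n`-rank Taft algebra:
`s(x^γ) = (-1)^{|γ|} q^{-⟨γ,γ+𝟏⟩/2} x^γ K(-γ)` and `s²(x^γ) = q^{-|γ|} x^γ`. -/
theorem stmt4 {k : Type*} [Field k] [CharZero k] [IsAlgClosed k]
    {A : Type*} [Ring A] [HopfAlgebra k A] {n ℓ : ℕ} {q : k}
    (hq : IsPrimitiveRoot q ℓ) (hℓ : 1 < ℓ)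
    (T : TaftPresentation k A n ℓ q q)
    (γ : Fin n → ℕ) :
    HopfAlgebra.antipode (R := k) (xpow T.x γ)
        = ((-1 : k) ^ (∑ i, γ i) *
            q ^ (-((∑ i, (γ i : ℤ) * ((γ i : ℤ) + 1)) / 2)))
          • (xpow T.x γ * T.K (fun i => -(γ i : ℤ))) ∧
    HopfAlgebra.antipode (R := k) (HopfAlgebra.antipode (R := k) (xpow T.x γ))
        = q ^ (-(∑ i, (γ i : ℤ))) • xpow T.x γ := by
  classical
  have hq0 : q ≠ 0 := by
    intro h
    have h1 := hq.pow_eq_one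
    rw [h, zero_pow (by omega : ℓ ≠ 0)] at h1
    exact zero_ne_one h1
  have hL : (List.finRange n).Pairwise (· < ·) := List.pairwise_lt_finRange n
  have hx : xpow T.x γ = T.wp γ (List.finRange n) := rfl
  have hαf : TaftPresentation.af γ (List.finRange n) = fun i => -(γ i : ℤ) := by
    funext j
    simp [TaftPresentation.af, List.mem_finRange]
  have hEE : (∑ i, -((γ i : ℤ) * ((γ i : ℤ) + 1) / 2))
      = -((∑ i, (γ i : ℤ) * ((γ i : ℤ) + 1)) / 2) := by
    have h2 : (∑ i, (γ i : ℤ) * ((γ i : ℤ) + 1))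
        = 2 * ∑ i, ((γ i : ℤ) * ((γ i : ℤ) + 1)) / 2 := by
      rw [Finset.mul_sum]
      refine Finset.sum_congr rfl fun i _ => ?_
      obtain ⟨c, hc⟩ := Int.even_mul_succ_self (γ i : ℤ)
      rw [hc]
      omega
    rw [h2, Int.mul_ediv_cancel_left _ (by norm_num : (2:ℤ) ≠ 0), Finset.sum_neg_distrib]
  have part1 : HopfAlgebra.antipode (R := k) (xpow T.x γ)
      = ((-1 : k) ^ (∑ i, γ i) *
          q ^ (-((∑ i, (γ i : ℤ) * ((γ i : ℤ) + 1)) / 2)))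
        • (xpow T.x γ * T.K (fun i => -(γ i : ℤ))) := by
    rw [hx, T.key hq0 γ (List.finRange n) hL, hαf]
    rw [show (((List.finRange n).map γ).sum) = ∑ i, γ i from (Fin.sum_univ_def γ).symm]
    rw [show (((List.finRange n).map (fun i => -((γ i : ℤ) * ((γ i : ℤ) + 1) / 2))).sum)
        = ∑ i, -((γ i : ℤ) * ((γ i : ℤ) + 1) / 2) from (Fin.sum_univ_def _).symm]
    rw [hEE]
  refine ⟨part1, ?_⟩
  -- part 2
  set N : ℕ := ∑ i, γ i with hN
  set E : ℤ := -((∑ i, (γ i : ℤ) * ((γ i : ℤ) + 1)) / 2) with hE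
  have hpf : -(fun i => -(γ i : ℤ)) = TaftPresentation.pf γ (List.finRange n) := by
    funext j
    simp [TaftPresentation.pf, List.mem_finRange]
  have hzero : TaftPresentation.pf γ (List.finRange n) + (fun i => -(γ i : ℤ)) = 0 := by
    funext j
    simp [TaftPresentation.pf, List.mem_finRange]
  have hcomm := T.K_pf_wp γ hq0 (List.finRange n) (List.nodup_finRange n) (List.finRange n)
  set Etot : ℤ :=
    (((List.finRange n).map (fun i => (γ i : ℤ) * (((List.finRange n).map (fun j => (γ j : ℤ) * dd j i)).sum))).sum) with hEtot
  -- identify Etot with ∑ γ i ^ 2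
  have hEtot2 : Etot = ∑ i, (γ i : ℤ) * (γ i : ℤ) := by
    have hconv : Etot = ∑ i, (γ i : ℤ) * (∑ j, (γ j : ℤ) * dd j i) := by
      rw [hEtot]
      simp only [← Fin.sum_univ_def]
    have expand : ∀ i, (∑ j, (γ j : ℤ) * dd j i)
        = (∑ j, (γ j : ℤ) * sgg j i) + (γ i : ℤ) := by
      intro i
      simp only [dd, mul_add]
      rw [Finset.sum_add_distrib]
      congr 1
      simp [mul_ite, Finset.sum_ite_eq']
    have hS0 : (∑ i, (γ i : ℤ) * (∑ j, (γ j : ℤ) * sgg j i)) = 0 := by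
      set S : ℤ := ∑ i, (γ i : ℤ) * (∑ j, (γ j : ℤ) * sgg j i) with hS
      have h1 : S = ∑ i, ∑ j, (γ i : ℤ) * ((γ j : ℤ) * sgg j i) := by
        rw [hS]
        refine Finset.sum_congr rfl fun i _ => ?_
        rw [Finset.mul_sum]
      have h2 : S = -S := by
        calc S = ∑ i, ∑ j, (γ i : ℤ) * ((γ j : ℤ) * sgg j i) := h1
          _ = ∑ j, ∑ i, (γ i : ℤ) * ((γ j : ℤ) * sgg j i) := Finset.sum_comm
          _ = ∑ i, ∑ j, -((γ i : ℤ) * ((γ j : ℤ) * sgg j i)) := by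
              refine Finset.sum_congr rfl fun i _ => ?_
              refine Finset.sum_congr rfl fun j _ => ?_
              rw [sgg_antisymm j i]
              ring
          _ = -S := by
              rw [h1]
              simp [Finset.sum_neg_distrib]
      omega
    rw [hconv]
    calc ∑ i, (γ i : ℤ) * (∑ j, (γ j : ℤ) * dd j i)
        = ∑ i, ((γ i : ℤ) * (∑ j, (γ j : ℤ) * sgg j i) + (γ i : ℤ) * (γ i : ℤ)) := by
          refine Finset.sum_congr rfl fun i _ => ?_
          rw [expand i, mul_add]
      _ = (∑ i, (γ i : ℤ) * (∑ j, (γ j : ℤ) * sgg j i)) + ∑ i, (γ i : ℤ) * (γ i : ℤ) := by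
          rw [Finset.sum_add_distrib]
      _ = ∑ i, (γ i : ℤ) * (γ i : ℤ) := by rw [hS0, zero_add]
  have hexp : E + E + Etot = -(∑ i, (γ i : ℤ)) := by
    rw [hEtot2, ← hEE]
    rw [← Finset.sum_add_distrib, ← Finset.sum_add_distrib, ← Finset.sum_neg_distrib]
    refine Finset.sum_congr rfl fun i _ => ?_
    obtain ⟨c, hc⟩ := Int.even_mul_succ_self (γ i : ℤ)
    have h3 : (γ i : ℤ) * (γ i : ℤ) = c + c - (γ i : ℤ) := by nlinarith [hc]
    rw [hc, h3]
    omega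
  have hsign : ((-1 : k) ^ N) * ((-1 : k) ^ N) = 1 := by
    rw [← pow_add]
    exact Even.neg_one_pow ⟨N, rfl⟩
  rw [part1, map_smul, T.antipode_mul_K, part1, hpf, mul_smul_comm, smul_smul, hx,
    ← mul_assoc (T.K (TaftPresentation.pf γ (List.finRange n))), hcomm, smul_mul_assoc, mul_assoc (T.wp γ (List.finRange n)), T.K_add, hzero, T.K_zero, mul_one,
    smul_smul]
  congr 1
  have hs2 : (-1 : k) ^ N * (-1 : k) ^ N * (q ^ E * q ^ E * q ^ Etot)
      = q ^ (-(∑ i, (γ i : ℤ))) := by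
    rw [hsign, one_mul, ← zpow_add₀ hq0, ← zpow_add₀ hq0, hexp]
  rw [← hs2]
  ring


end Final
end

section
/- The group of group-like elements of the dual Hopf algebra 𝒜̄_q(n)* is {κ(α) : α ∈ Λ_+, 0 ≤ α_i ≤ ℓ-1}, where κ(α)(x^γ K(β)) = δ_{γ,0} q^{⟨α,β⟩}, and this group is isomorphic to (ℤ/ℓℤ)^n. -/
open scoped TensorProduct

namespace TaftPresentation

variable {k : Type*} [Field k] {A : Type*} [Ring A] [HopfAlgebra k A]
  {n ℓ : ℕ} {q t : k}

namespace Aux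

variable {k : Type*} [Field k] {A : Type*} [Ring A] [HopfAlgebra k A]
  {n ℓ : ℕ} {q t : k} (T : TaftPresentation k A n ℓ q t)

lemma K_pow_eps (i : Fin n) (m : ℕ) : T.K (m • epsZ i) = T.K (epsZ i) ^ m := by
  induction m with
  | zero => simpa using T.K_zero
  | succ m ih => rw [succ_nsmul, ← T.K_add, ih, pow_succ]

lemma K_list (c : Fin n → ℕ) :
    ∀ L : List (Fin n), L.Nodup →
      T.K (fun i => if i ∈ L then (c i : ℤ) else 0)
        = (L.map (fun i => T.K (epsZ i) ^ c i)).prod := by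
  intro L
  induction L with
  | nil => intro _; simpa using (show T.K (fun _ => 0) = 1 from T.K_zero)
  | cons a L ih =>
    intro hnd
    have ha : a ∉ L := (List.nodup_cons.mp hnd).1
    have h1 : (fun i => if i ∈ a :: L then (c i : ℤ) else 0)
        = ((c a • epsZ a) + fun i => if i ∈ L then (c i : ℤ) else 0) := by
      funext i
      by_cases hia : i = a
      · subst hia; simp [epsZ, ha]
      · simp [epsZ, hia]
    rw [h1, ← T.K_add, K_pow_eps, List.map_cons, List.prod_cons,
      ih (List.nodup_cons.mp hnd).2]

lemma K_eq (c : Fin n → ℕ) :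
    T.K (fun i => (c i : ℤ))
      = ((List.finRange n).map (fun i => T.K (epsZ i) ^ c i)).prod := by
  rw [← K_list T c (List.finRange n) (List.nodup_finRange n)]
  congr 1
  funext i
  simp [List.mem_finRange]

lemma K_ell_mul (d : Fin n → ℕ) : T.K (fun i => ((ℓ * d i : ℕ) : ℤ)) = 1 := by
  rw [K_eq]
  have h : ∀ i : Fin n, T.K (epsZ i) ^ (ℓ * d i) = 1 := fun i => by
    rw [pow_mul, T.K_ell, one_pow]
  simp [h]

lemma K_mod (c : Fin n → ℕ) :
    T.K (fun i => (c i : ℤ)) = T.K (fun i => ((c i % ℓ : ℕ) : ℤ)) := by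
  have h1 : (fun i => (c i : ℤ))
      = ((fun i => ((c i % ℓ : ℕ) : ℤ)) + fun i => ((ℓ * (c i / ℓ) : ℕ) : ℤ)) := by
    funext i
    simp only [Pi.add_apply]
    exact_mod_cast (Nat.mod_add_div (c i) ℓ).symm
  rw [h1, ← T.K_add, K_ell_mul, mul_one]

lemma K_eps_pow_mul_x (i j : Fin n) (m : ℕ) :
    ∃ s : k, T.K (epsZ i) ^ m * T.x j = s • (T.x j * T.K (epsZ i) ^ m) := by
  induction m with
  | zero => exact ⟨1, by simp⟩
  | succ m ih =>
    obtain ⟨s, hs⟩ := ih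
    refine ⟨(theta t (epsZ i) (epsZ j) * if i = j then q else 1) * s, ?_⟩
    calc T.K (epsZ i) ^ (m + 1) * T.x j
        = T.K (epsZ i) ^ m * (T.K (epsZ i) * T.x j) := by rw [pow_succ, mul_assoc]
      _ = T.K (epsZ i) ^ m *
          ((theta t (epsZ i) (epsZ j) * if i = j then q else 1) • (T.x j * T.K (epsZ i))) := by
            rw [T.K_x]
      _ = (theta t (epsZ i) (epsZ j) * if i = j then q else 1) •
          ((T.K (epsZ i) ^ m * T.x j) * T.K (epsZ i)) := by
            rw [mul_smul_comm, mul_assoc]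
      _ = (theta t (epsZ i) (epsZ j) * if i = j then q else 1) •
          ((s • (T.x j * T.K (epsZ i) ^ m)) * T.K (epsZ i)) := by rw [hs]
      _ = ((theta t (epsZ i) (epsZ j) * if i = j then q else 1) * s) •
          (T.x j * T.K (epsZ i) ^ (m + 1)) := by
            rw [smul_mul_assoc, smul_smul]
            congr 1
            rw [mul_assoc, ← pow_succ]

lemma K_list_mul_x (c : Fin n → ℕ) (j : Fin n) :
    ∀ L : List (Fin n),
      ∃ s : k, (L.map (fun i => T.K (epsZ i) ^ c i)).prod * T.x j
        = s • (T.x j * (L.map (fun i => T.K (epsZ i) ^ c i)).prod) := by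
  intro L
  induction L with
  | nil => exact ⟨1, by simp⟩
  | cons a L ih =>
    obtain ⟨s, hs⟩ := ih
    obtain ⟨s', hs'⟩ := K_eps_pow_mul_x T a j (c a)
    refine ⟨s * s', ?_⟩
    calc (((a :: L).map (fun i => T.K (epsZ i) ^ c i)).prod) * T.x j
        = T.K (epsZ a) ^ c a * ((L.map (fun i => T.K (epsZ i) ^ c i)).prod * T.x j) := by
          rw [List.map_cons, List.prod_cons, mul_assoc]
      _ = T.K (epsZ a) ^ c a *
          (s • (T.x j * (L.map (fun i => T.K (epsZ i) ^ c i)).prod)) := by rw [hs]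
      _ = s • ((T.K (epsZ a) ^ c a * T.x j) * (L.map (fun i => T.K (epsZ i) ^ c i)).prod) := by
          rw [mul_smul_comm, mul_assoc]
      _ = s • ((s' • (T.x j * T.K (epsZ a) ^ c a)) *
          (L.map (fun i => T.K (epsZ i) ^ c i)).prod) := by rw [hs']
      _ = (s * s') • (T.x j * ((a :: L).map (fun i => T.K (epsZ i) ^ c i)).prod) := by
          rw [smul_mul_assoc, smul_smul, List.map_cons, List.prod_cons, mul_assoc]

lemma K_mul_x (c : Fin n → ℕ) (j : Fin n) :
    ∃ s : k, T.K (fun i => (c i : ℤ)) * T.x j = s • (T.x j * T.K (fun i => (c i : ℤ))) := by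
  rw [K_eq]
  exact K_list_mul_x T c j (List.finRange n)

lemma K_mul_x_pow (c : Fin n → ℕ) (j : Fin n) (m : ℕ) :
    ∃ s : k, T.K (fun i => (c i : ℤ)) * T.x j ^ m
      = s • (T.x j ^ m * T.K (fun i => (c i : ℤ))) := by
  induction m with
  | zero => exact ⟨1, by simp⟩
  | succ m ih =>
    obtain ⟨s, hs⟩ := ih
    obtain ⟨s', hs'⟩ := K_mul_x T c j
    refine ⟨s * s', ?_⟩
    calc T.K (fun i => (c i : ℤ)) * T.x j ^ (m + 1)
        = (T.K (fun i => (c i : ℤ)) * T.x j ^ m) * T.x j := by rw [pow_succ, mul_assoc]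
      _ = (s • (T.x j ^ m * T.K (fun i => (c i : ℤ)))) * T.x j := by rw [hs]
      _ = s • (T.x j ^ m * (T.K (fun i => (c i : ℤ)) * T.x j)) := by
          rw [smul_mul_assoc, mul_assoc]
      _ = s • (T.x j ^ m * (s' • (T.x j * T.K (fun i => (c i : ℤ))))) := by rw [hs']
      _ = (s * s') • (T.x j ^ (m + 1) * T.K (fun i => (c i : ℤ))) := by
          rw [mul_smul_comm, smul_smul, ← mul_assoc, ← pow_succ]

lemma K_mul_xlist (c γ : Fin n → ℕ) :
    ∀ L : List (Fin n),
      ∃ s : k, T.K (fun i => (c i : ℤ)) * (L.map (fun i => T.x i ^ γ i)).prod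
        = s • ((L.map (fun i => T.x i ^ γ i)).prod * T.K (fun i => (c i : ℤ))) := by
  intro L
  induction L with
  | nil => exact ⟨1, by simp⟩
  | cons a L ih =>
    obtain ⟨s, hs⟩ := ih
    obtain ⟨s', hs'⟩ := K_mul_x_pow T c a (γ a)
    refine ⟨s' * s, ?_⟩
    calc T.K (fun i => (c i : ℤ)) * ((a :: L).map (fun i => T.x i ^ γ i)).prod
        = (T.K (fun i => (c i : ℤ)) * T.x a ^ γ a) * (L.map (fun i => T.x i ^ γ i)).prod := by
          rw [List.map_cons, List.prod_cons, mul_assoc]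
      _ = (s' • (T.x a ^ γ a * T.K (fun i => (c i : ℤ)))) *
          (L.map (fun i => T.x i ^ γ i)).prod := by rw [hs']
      _ = s' • (T.x a ^ γ a *
          (T.K (fun i => (c i : ℤ)) * (L.map (fun i => T.x i ^ γ i)).prod)) := by
          rw [smul_mul_assoc, mul_assoc]
      _ = s' • (T.x a ^ γ a *
          (s • ((L.map (fun i => T.x i ^ γ i)).prod * T.K (fun i => (c i : ℤ))))) := by
          rw [hs]
      _ = (s' * s) • (((a :: L).map (fun i => T.x i ^ γ i)).prod *
          T.K (fun i => (c i : ℤ))) := by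
          rw [mul_smul_comm, smul_smul, List.map_cons, List.prod_cons, mul_assoc]

lemma K_mul_xpow (c γ : Fin n → ℕ) :
    ∃ s : k, T.K (fun i => (c i : ℤ)) * xpow T.x γ
      = s • (xpow T.x γ * T.K (fun i => (c i : ℤ))) :=
  K_mul_xlist T c γ (List.finRange n)

lemma theta_ne_zero (ht : t ≠ 0) (α β : Fin n → ℤ) : theta t α β ≠ 0 :=
  zpow_ne_zero _ ht

lemma x_mul_x_pow (ht : t ≠ 0) (j i : Fin n) (m : ℕ) :
    ∃ s : k, s ≠ 0 ∧ T.x j * T.x i ^ m = s • (T.x i ^ m * T.x j) := by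
  induction m with
  | zero => exact ⟨1, one_ne_zero, by simp⟩
  | succ m ih =>
    obtain ⟨s, hs0, hs⟩ := ih
    refine ⟨theta t (epsZ j) (epsZ i) * s,
      mul_ne_zero (theta_ne_zero ht _ _) hs0, ?_⟩
    calc T.x j * T.x i ^ (m + 1)
        = (T.x j * T.x i) * T.x i ^ m := by rw [pow_succ', mul_assoc]
      _ = (theta t (epsZ j) (epsZ i) • (T.x i * T.x j)) * T.x i ^ m := by rw [T.x_x]
      _ = theta t (epsZ j) (epsZ i) • (T.x i * (T.x j * T.x i ^ m)) := by
          rw [smul_mul_assoc, mul_assoc]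
      _ = theta t (epsZ j) (epsZ i) • (T.x i * (s • (T.x i ^ m * T.x j))) := by rw [hs]
      _ = (theta t (epsZ j) (epsZ i) * s) • (T.x i ^ (m + 1) * T.x j) := by
          rw [mul_smul_comm, smul_smul, pow_succ', mul_assoc]

lemma x_front (ht : t ≠ 0) (γ : Fin n → ℕ) (j : Fin n) :
    ∀ L : List (Fin n), L.Nodup → j ∈ L →
      ∃ s : k, s ≠ 0 ∧ T.x j * (L.map (fun i => T.x i ^ γ i)).prod
        = s • (L.map (fun i => T.x i ^ (γ i + if i = j then 1 else 0))).prod := by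
  intro L
  induction L with
  | nil => intro _ h; exact absurd h List.not_mem_nil
  | cons a L ih =>
    intro hnd hmem
    have ha : a ∉ L := (List.nodup_cons.mp hnd).1
    by_cases haj : a = j
    · subst haj
      refine ⟨1, one_ne_zero, ?_⟩
      have hrest : (L.map (fun i => T.x i ^ (γ i + if i = a then 1 else 0)))
          = (L.map (fun i => T.x i ^ γ i)) := by
        apply List.map_congr_left
        intro i hi
        have : i ≠ a := fun h => ha (h ▸ hi)
        simp [this]
      rw [one_smul, List.map_cons, List.prod_cons, List.map_cons, List.prod_cons,
        hrest, ← mul_assoc, ← pow_succ', if_pos rfl]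
    · have hjL : j ∈ L := by
        rcases List.mem_cons.mp hmem with h | h
        · exact absurd h.symm haj
        · exact h
      obtain ⟨s, hs0, hs⟩ := ih (List.nodup_cons.mp hnd).2 hjL
      obtain ⟨s', hs'0, hs'⟩ := x_mul_x_pow T ht j a (γ a)
      refine ⟨s' * s, mul_ne_zero hs'0 hs0, ?_⟩
      have haj' : (γ a + if a = j then 1 else 0) = γ a := by simp [haj]
      calc T.x j * ((a :: L).map (fun i => T.x i ^ γ i)).prod
          = (T.x j * T.x a ^ γ a) * (L.map (fun i => T.x i ^ γ i)).prod := by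
            rw [List.map_cons, List.prod_cons, mul_assoc]
        _ = (s' • (T.x a ^ γ a * T.x j)) * (L.map (fun i => T.x i ^ γ i)).prod := by
            rw [hs']
        _ = s' • (T.x a ^ γ a * (T.x j * (L.map (fun i => T.x i ^ γ i)).prod)) := by
            rw [smul_mul_assoc, mul_assoc]
        _ = s' • (T.x a ^ γ a *
            (s • (L.map (fun i => T.x i ^ (γ i + if i = j then 1 else 0))).prod)) := by
            rw [hs]
        _ = (s' * s) • ((a :: L).map (fun i => T.x i ^ (γ i + if i = j then 1 else 0))).prod := by
            rw [mul_smul_comm, smul_smul, List.map_cons, List.prod_cons, haj']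

lemma x_mul_xpow (ht : t ≠ 0) (γ : Fin n → ℕ) (j : Fin n) :
    ∃ s : k, s ≠ 0 ∧ T.x j * xpow T.x γ
      = s • xpow T.x (fun i => γ i + if i = j then 1 else 0) :=
  x_front T ht γ j (List.finRange n) (List.nodup_finRange n) (List.mem_finRange j)

lemma xpow_eq_zero (γ : Fin n → ℕ) (j : Fin n) (h : ℓ ≤ γ j) : xpow T.x γ = 0 := by
  apply List.prod_eq_zero
  have hx : T.x j ^ γ j = 0 := by
    have hγ : γ j = ℓ + (γ j - ℓ) := by omega
    rw [hγ, pow_add, T.x_ell, zero_mul]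
  exact (List.mem_map).mpr ⟨j, List.mem_finRange j, hx⟩

lemma xpow_zero_fun (x : Fin n → A) : xpow x (fun _ => 0) = 1 := by
  simp [xpow]

end Aux

end TaftPresentation

open TaftPresentation.Aux in
/-- Existence of the character `κ(α)`. -/
theorem taft_exists_kappa {k : Type*} [Field k]
    {A : Type*} [Ring A] [HopfAlgebra k A] {n ℓ : ℕ} {q : k}
    (hq : IsPrimitiveRoot q ℓ) (hℓ : 1 < ℓ)
    (T : TaftPresentation k A n ℓ q q)
    (b : Module.Basis ((Fin n → Fin ℓ) × (Fin n → Fin ℓ)) k A)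
    (hb : ∀ p, b p = T.mono p.1 p.2) (α : Fin n → Fin ℓ) :
    ∃ χ : A →ₐ[k] k, ∀ γ β : Fin n → Fin ℓ,
      χ (T.mono γ β)
        = if ∀ i, (γ i : ℕ) = 0 then q ^ (∑ i, (α i : ℕ) * (β i : ℕ)) else 0 := by
  haveI : NeZero ℓ := ⟨by omega⟩
  have hq0 : q ≠ 0 := hq.ne_zero (by omega)
  have hqℓ : q ^ ℓ = 1 := hq.pow_eq_one
  have hpmod : ∀ m : ℕ, q ^ (m % ℓ) = q ^ m := by
    intro m
    conv_rhs => rw [← Nat.mod_add_div m ℓ]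
    rw [pow_add, pow_mul, hqℓ, one_pow, mul_one]
  set v : (Fin n → Fin ℓ) × (Fin n → Fin ℓ) → k :=
    fun p => if ∀ i, (p.1 i : ℕ) = 0 then q ^ (∑ i, (α i : ℕ) * (p.2 i : ℕ)) else 0 with hv
  set φ : A →ₗ[k] k := b.constr k v with hφ
  have hφb : ∀ p, φ (b p) = v p := fun p => b.constr_basis k v p
  have hmono : ∀ (c d : Fin n → Fin ℓ),
      T.mono c d = xpow T.x (fun i => (c i : ℕ)) * T.K (fun i => ((d i : ℕ) : ℤ)) :=
    fun c d => rfl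
  -- φ kills anything of the form x j * a
  have hxkill : ∀ (j : Fin n) (a : A), φ (T.x j * a) = 0 := by
    intro j
    have hz : φ ∘ₗ LinearMap.mulLeft k (T.x j) = 0 := by
      apply b.ext
      rintro ⟨γ, β⟩
      simp only [LinearMap.comp_apply, LinearMap.mulLeft_apply, LinearMap.zero_apply]
      rw [hb]
      obtain ⟨s, hs0, hs⟩ := x_mul_xpow T hq0 (fun i => (γ i : ℕ)) j
      have hdec : T.x j * T.mono γ β
          = s • (xpow T.x (fun i => (γ i : ℕ) + if i = j then 1 else 0)
              * T.K (fun i => ((β i : ℕ) : ℤ))) := by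
        rw [hmono, ← mul_assoc, hs, smul_mul_assoc]
      rw [hdec, map_smul]
      by_cases hbig : ℓ ≤ (γ j : ℕ) + 1
      · rw [xpow_eq_zero T _ j (by simp [hbig]), zero_mul, map_zero, smul_zero]
      · push_neg at hbig
        set γ' : Fin n → Fin ℓ := fun i =>
          if h : i = j then ⟨(γ i : ℕ) + 1, by subst h; omega⟩
          else ⟨(γ i : ℕ), (γ i).isLt⟩ with hγ'
        have hvals : (fun i => (γ' i : ℕ)) = fun i => (γ i : ℕ) + if i = j then 1 else 0 := by
          funext i; by_cases h : i = j <;> simp [hγ', h]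
        have hmu : xpow T.x (fun i => (γ i : ℕ) + if i = j then 1 else 0)
            * T.K (fun i => ((β i : ℕ) : ℤ)) = b (γ', β) := by
          rw [hb, hmono, hvals]
        rw [hmu, hφb]
        have hne : ¬ (∀ i, (γ' i : ℕ) = 0) := by
          intro hall
          have := hall j
          simp [hγ'] at this
        simp only [hv]
        rw [if_neg hne, smul_zero]
    intro a
    exact LinearMap.congr_fun hz a
  -- multiplicativity on basis elements
  have key : ∀ p p' : (Fin n → Fin ℓ) × (Fin n → Fin ℓ),
      φ (b p * b p') = φ (b p) * φ (b p') := by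
    rintro ⟨γ, β⟩ ⟨γ', β'⟩
    have hKK : T.K (fun i => ((β i : ℕ) : ℤ)) * T.K (fun i => ((β' i : ℕ) : ℤ))
        = T.K (fun i => (((β i : ℕ) + (β' i : ℕ) : ℕ) : ℤ)) := by
      rw [T.K_add]
      congr 1
    by_cases hγ : ∀ i, (γ i : ℕ) = 0
    · have hX1 : xpow T.x (fun i => (γ i : ℕ)) = 1 := by
        have h0 : (fun i => (γ i : ℕ)) = fun _ => 0 := funext hγ
        rw [h0, xpow_zero_fun]
      by_cases hγ' : ∀ i, (γ' i : ℕ) = 0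
      · -- both group-like: product of K's
        have hX3 : xpow T.x (fun i => (γ' i : ℕ)) = 1 := by
          have h0 : (fun i => (γ' i : ℕ)) = fun _ => 0 := funext hγ'
          rw [h0, xpow_zero_fun]
        set β'' : Fin n → Fin ℓ :=
          fun i => ⟨((β i : ℕ) + (β' i : ℕ)) % ℓ, Nat.mod_lt _ (by omega)⟩ with hβ''
        have h2 : b (γ, β) * b (γ', β') = b (γ, β'') := by
          rw [hb, hb, hb, hmono, hmono, hmono, hX1, hX3, one_mul, one_mul, one_mul, hKK,
            K_mod T]
        rw [h2, hφb, hφb, hφb]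
        simp only [hv]
        rw [if_pos hγ, if_pos hγ, if_pos hγ']
        have hbv : ∀ i, (β'' i : ℕ) = ((β i : ℕ) + (β' i : ℕ)) % ℓ := fun i => rfl
        calc q ^ (∑ i, (α i : ℕ) * (β'' i : ℕ))
            = ∏ i, q ^ ((α i : ℕ) * (((β i : ℕ) + (β' i : ℕ)) % ℓ)) := by
              rw [Finset.prod_pow_eq_pow_sum]
          _ = ∏ i, q ^ ((α i : ℕ) * ((β i : ℕ) + (β' i : ℕ))) := by
              refine Finset.prod_congr rfl fun i _ => ?_
              rw [mul_comm, pow_mul, hpmod, ← pow_mul, mul_comm]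
          _ = q ^ (∑ i, (α i : ℕ) * ((β i : ℕ) + (β' i : ℕ))) := by
              rw [Finset.prod_pow_eq_pow_sum]
          _ = q ^ (∑ i, (α i : ℕ) * (β i : ℕ)) * q ^ (∑ i, (α i : ℕ) * (β' i : ℕ)) := by
              rw [← pow_add, ← Finset.sum_add_distrib]
              congr 1
              exact Finset.sum_congr rfl fun i _ => by rw [mul_add]
      · -- γ' nontrivial
        obtain ⟨s₁, hs₁⟩ := K_mul_xpow T (fun i => (β i : ℕ)) (fun i => (γ' i : ℕ))
        have hsplit : b (γ, β) * b (γ', β')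
            = s₁ • (xpow T.x (fun i => (γ' i : ℕ))
                * T.K (fun i => (((β i : ℕ) + (β' i : ℕ) : ℕ) : ℤ))) := by
          rw [hb, hb, hmono, hmono, hX1, one_mul, ← mul_assoc, hs₁, smul_mul_assoc,
            mul_assoc, hKK]
        obtain ⟨j, hj⟩ := not_forall.mp hγ'
        set c' : Fin n → ℕ := fun i => (γ' i : ℕ) - (if i = j then 1 else 0) with hc'
        have hc'' : (fun i => c' i + if i = j then 1 else 0) = fun i => (γ' i : ℕ) := by
          funext i
          simp only [hc']
          split_ifs with h
          · subst h; omega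
          · omega
        obtain ⟨s₂, hs₂0, hs₂⟩ := x_mul_xpow T hq0 c' j
        rw [hc''] at hs₂
        have h5 : s₂ • (b (γ, β) * b (γ', β'))
            = s₁ • (T.x j * (xpow T.x c'
                * T.K (fun i => (((β i : ℕ) + (β' i : ℕ) : ℕ) : ℤ)))) := by
          rw [hsplit, smul_comm, ← smul_mul_assoc, ← hs₂, mul_assoc]
        have h6 := congrArg φ h5
        rw [map_smul, map_smul, hxkill, smul_zero, smul_eq_mul] at h6
        have h7 : φ (b (γ, β) * b (γ', β')) = 0 :=
          (mul_eq_zero.mp h6).resolve_left hs₂0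
        rw [h7, hφb, hφb]
        simp only [hv]
        rw [if_neg hγ', mul_zero]
    · -- γ nontrivial
      obtain ⟨s₁, hs₁⟩ := K_mul_xpow T (fun i => (β i : ℕ)) (fun i => (γ' i : ℕ))
      have hsplit : b (γ, β) * b (γ', β')
          = s₁ • (xpow T.x (fun i => (γ i : ℕ)) * (xpow T.x (fun i => (γ' i : ℕ))
              * T.K (fun i => (((β i : ℕ) + (β' i : ℕ) : ℕ) : ℤ)))) := by
        rw [hb, hb, hmono, hmono, mul_assoc,
          ← mul_assoc (T.K fun i => ((β i : ℕ) : ℤ)), hs₁, smul_mul_assoc,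
          mul_smul_comm, mul_assoc, hKK]
      obtain ⟨j, hj⟩ := not_forall.mp hγ
      set c' : Fin n → ℕ := fun i => (γ i : ℕ) - (if i = j then 1 else 0) with hc'
      have hc'' : (fun i => c' i + if i = j then 1 else 0) = fun i => (γ i : ℕ) := by
        funext i
        simp only [hc']
        split_ifs with h
        · subst h; omega
        · omega
      obtain ⟨s₂, hs₂0, hs₂⟩ := x_mul_xpow T hq0 c' j
      rw [hc''] at hs₂
      have h5 : s₂ • (b (γ, β) * b (γ', β'))
          = s₁ • (T.x j * (xpow T.x c' * (xpow T.x (fun i => (γ' i : ℕ))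
              * T.K (fun i => (((β i : ℕ) + (β' i : ℕ) : ℕ) : ℤ))))) := by
        rw [hsplit, smul_comm, ← smul_mul_assoc, ← hs₂, mul_assoc]
      have h6 := congrArg φ h5
      rw [map_smul, map_smul, hxkill, smul_zero, smul_eq_mul] at h6
      have h7 : φ (b (γ, β) * b (γ', β')) = 0 :=
        (mul_eq_zero.mp h6).resolve_left hs₂0
      rw [h7, hφb, hφb]
      simp only [hv]
      rw [if_neg hγ, zero_mul]
  -- φ is unital
  have hone : φ 1 = 1 := by
    have h1 : (1 : A) = b (fun _ => 0, fun _ => 0) := by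
      rw [hb, hmono]
      have hx0 : (fun i : Fin n => (((fun _ => (0 : Fin ℓ)) i : Fin ℓ) : ℕ)) =
          fun _ : Fin n => 0 := by funext i; simp
      have hk0 : (fun i : Fin n => ((((fun _ => (0 : Fin ℓ)) i : Fin ℓ) : ℕ) : ℤ)) =
          (0 : Fin n → ℤ) := by funext i; simp
      rw [hx0, hk0, xpow_zero_fun, T.K_zero, one_mul]
    rw [h1, hφb]
    simp [hv]
  -- φ is multiplicative
  have hmul : ∀ a₁ a₂ : A, φ (a₁ * a₂) = φ a₁ * φ a₂ := by
    have h1 : (LinearMap.mul k A).compr₂ φ = (LinearMap.mul k k).compl₁₂ φ φ := by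
      apply b.ext
      intro p
      apply b.ext
      intro p'
      simp only [LinearMap.compr₂_apply, LinearMap.mul_apply', LinearMap.compl₁₂_apply]
      exact key p p'
    intro a₁ a₂
    have h2 := LinearMap.congr_fun (LinearMap.congr_fun h1 a₁) a₂
    simpa using h2
  refine ⟨AlgHom.ofLinearMap φ hone hmul, ?_⟩
  intro γ β
  show φ (T.mono γ β) = _
  rw [← hb ⟨γ, β⟩, hφb]

/-- the group-like elements of the dual Hopf algebra `𝒜̄_q(n)*`
(equivalently, the algebra homomorphisms `𝒜̄_q(n) → k`) are exactly the `κ(α)`,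
`α ∈ {0,…,ℓ-1}^n`, where `κ(α)(x^γ K(β)) = δ_{γ,0} q^{⟨α,β⟩}`; they are in
bijection with `(ℤ/ℓℤ)^n`. -/
theorem stmt7 {k : Type*} [Field k] [CharZero k] [IsAlgClosed k]
    {A : Type*} [Ring A] [HopfAlgebra k A] {n ℓ : ℕ} {q : k}
    (hq : IsPrimitiveRoot q ℓ) (hℓ : 1 < ℓ)
    (T : TaftPresentation k A n ℓ q q)
    (b : Module.Basis ((Fin n → Fin ℓ) × (Fin n → Fin ℓ)) k A)
    (hb : ∀ p, b p = T.mono p.1 p.2) :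
    (∀ χ : A →ₐ[k] k, ∃! α : Fin n → Fin ℓ, ∀ γ β : Fin n → Fin ℓ,
        χ (T.mono γ β)
          = if ∀ i, (γ i : ℕ) = 0 then q ^ (∑ i, (α i : ℕ) * (β i : ℕ)) else 0) ∧
    (∀ α : Fin n → Fin ℓ, ∃ χ : A →ₐ[k] k, ∀ γ β : Fin n → Fin ℓ,
        χ (T.mono γ β)
          = if ∀ i, (γ i : ℕ) = 0 then q ^ (∑ i, (α i : ℕ) * (β i : ℕ)) else 0) := by
  haveI : NeZero ℓ := ⟨by omega⟩
  have hq0 : q ≠ 0 := hq.ne_zero (by omega)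
  have hq1 : q ≠ 1 := hq.ne_one hℓ
  constructor
  · intro χ
    have hKone : ∀ i, χ (T.K (epsZ i)) ^ ℓ = 1 := fun i => by
      rw [← map_pow, T.K_ell, map_one]
    choose a haℓ hqa using fun i => hq.eq_pow_of_pow_eq_one (hKone i)
    have hKne : ∀ i, χ (T.K (epsZ i)) ≠ 0 := fun i => by
      rw [← hqa i]; exact pow_ne_zero _ hq0
    have hxz : ∀ i, χ (T.x i) = 0 := by
      intro i
      have h := congrArg χ (T.K_x i i)
      rw [map_mul, map_smul, map_mul] at h
      have hθ : theta q (epsZ i) (epsZ i) = 1 := by rw [theta, sub_self, zpow_zero]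
      rw [hθ, if_pos rfl, one_mul, smul_eq_mul] at h
      have h2 : χ (T.x i) * (χ (T.K (epsZ i)) * (1 - q)) = 0 := by linear_combination h
      rcases mul_eq_zero.mp h2 with h3 | h3
      · exact h3
      · rcases mul_eq_zero.mp h3 with h4 | h4
        · exact absurd h4 (hKne i)
        · exact absurd (sub_eq_zero.mp h4).symm hq1
    have hxval : ∀ c : Fin n → ℕ, χ (xpow T.x c) = if ∀ i, c i = 0 then 1 else 0 := by
      intro c
      rw [xpow, map_list_prod, List.map_map]
      by_cases hc : ∀ i, c i = 0
      · have h1 : (⇑χ ∘ fun i => T.x i ^ c i) = fun _ => 1 := by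
          funext i; simp [hc i]
        rw [h1, if_pos hc]
        simp
      · obtain ⟨j, hj⟩ := not_forall.mp hc
        rw [if_neg hc]
        apply List.prod_eq_zero
        refine List.mem_map.mpr ⟨j, List.mem_finRange j, ?_⟩
        simp [map_pow, hxz j, zero_pow hj]
    have hKval : ∀ c : Fin n → ℕ,
        χ (T.K (fun i => (c i : ℤ))) = q ^ (∑ i, a i * c i) := by
      intro c
      rw [TaftPresentation.Aux.K_eq T c, map_list_prod, List.map_map]
      have h1 : (⇑χ ∘ fun i => T.K (epsZ i) ^ c i) = fun i => q ^ (a i * c i) := by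
        funext i
        simp only [Function.comp_apply, map_pow]
        rw [← hqa i, ← pow_mul]
      rw [h1, ← Fin.prod_univ_def, Finset.prod_pow_eq_pow_sum]
    set α : Fin n → Fin ℓ := fun i => ⟨a i, haℓ i⟩ with hα
    have hmain : ∀ γ β : Fin n → Fin ℓ, χ (T.mono γ β)
        = if ∀ i, (γ i : ℕ) = 0 then q ^ (∑ i, (α i : ℕ) * (β i : ℕ)) else 0 := by
      intro γ β
      have hm : T.mono γ β
          = xpow T.x (fun i => (γ i : ℕ)) * T.K (fun i => ((β i : ℕ) : ℤ)) := rfl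
      rw [hm, map_mul, hxval, hKval]
      by_cases hc : ∀ i, (γ i : ℕ) = 0
      · rw [if_pos hc, if_pos hc, one_mul]
      · rw [if_neg hc, if_neg hc, zero_mul]
    refine ⟨α, hmain, ?_⟩
    intro α' hα'
    funext i
    apply Fin.ext
    set δ : Fin n → Fin ℓ := fun j => if j = i then ⟨1, hℓ⟩ else ⟨0, by omega⟩ with hδ
    have hδv : ∀ j, ((δ j : ℕ)) = if j = i then 1 else 0 := by
      intro j; by_cases h : j = i <;> simp [hδ, h]
    have hsum : ∀ c : Fin n → Fin ℓ, (∑ j, (c j : ℕ) * (δ j : ℕ)) = (c i : ℕ) := by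
      intro c
      have h1 : ∀ j, (c j : ℕ) * (δ j : ℕ) = if j = i then (c j : ℕ) else 0 := by
        intro j; rw [hδv]; split <;> simp
      rw [Finset.sum_congr rfl (fun j _ => h1 j),
        Finset.sum_ite_eq' Finset.univ i (fun j => (c j : ℕ)), if_pos (Finset.mem_univ i)]
    have hc0 : ∀ j : Fin n, (((fun _ => (0 : Fin ℓ)) j : Fin ℓ) : ℕ) = 0 := fun j => by simp
    have h1 := hα' (fun _ => 0) δ
    have h2 := hmain (fun _ => 0) δ
    rw [if_pos hc0, hsum] at h1 h2
    exact hq.pow_inj (α' i).isLt (α i).isLt (h1.symm.trans h2)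
  · intro α
    exact taft_exists_kappa hq hℓ T b hb α
end

section
/- The element Γ = x^κ Σ_{α} θ(α,κ) q^{⟨α,κ⟩} K(α), where κ = (ℓ-1,…,ℓ-1) and the sum runs over all α with 0 ≤ α_i ≤ ℓ-1, is a nonzero left integral of the n-rank Taft algebra 𝒜̄_q(n); i.e. hΓ = ε(h)Γ for all h ∈ 𝒜̄_q(n). -/
open scoped TensorProduct

section AuxZ
variable {n : ℕ}

lemma starForm_add_left (α β γ : Fin n → ℤ) :
    starForm (α + β) γ = starForm α γ + starForm β γ := by
  unfold starForm
  rw [← Finset.sum_add_distrib]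
  refine Finset.sum_congr rfl fun j _ => ?_
  rw [← Finset.sum_add_distrib]
  refine Finset.sum_congr rfl fun i _ => ?_
  split_ifs <;> simp [add_mul]

lemma starForm_add_right (α β γ : Fin n → ℤ) :
    starForm γ (α + β) = starForm γ α + starForm γ β := by
  unfold starForm
  rw [← Finset.sum_add_distrib]
  refine Finset.sum_congr rfl fun j _ => ?_
  rw [← Finset.sum_add_distrib]
  refine Finset.sum_congr rfl fun i _ => ?_
  split_ifs <;> simp [mul_add]

lemma starForm_neg_left (α γ : Fin n → ℤ) : starForm (-α) γ = -starForm α γ := by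
  unfold starForm
  rw [← Finset.sum_neg_distrib]
  refine Finset.sum_congr rfl fun j _ => ?_
  rw [← Finset.sum_neg_distrib]
  refine Finset.sum_congr rfl fun i _ => ?_
  split_ifs <;> simp

lemma starForm_neg_right (α γ : Fin n → ℤ) : starForm γ (-α) = -starForm γ α := by
  unfold starForm
  rw [← Finset.sum_neg_distrib]
  refine Finset.sum_congr rfl fun j _ => ?_
  rw [← Finset.sum_neg_distrib]
  refine Finset.sum_congr rfl fun i _ => ?_
  split_ifs <;> simp

lemma starForm_zero_left (γ : Fin n → ℤ) : starForm 0 γ = 0 := by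
  unfold starForm; simp

lemma starForm_zero_right (γ : Fin n → ℤ) : starForm γ 0 = 0 := by
  unfold starForm; simp

lemma sum_smul_epsZ (α : Fin n → ℤ) : ∑ i, α i • epsZ i = α := by
  funext j
  rw [Finset.sum_apply]
  simp [epsZ, mul_ite]

lemma genInduction (P : (Fin n → ℤ) → Prop) (h0 : P 0)
    (hadd : ∀ u v, P u → P v → P (u + v)) (hneg : ∀ u, P u → P (-u))
    (heps : ∀ i, P (epsZ i)) : ∀ α, P α := by
  have hsm : ∀ (m : ℤ) (i : Fin n), P (m • epsZ i) := by
    intro m i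
    induction m using Int.induction_on with
    | zero => simpa using h0
    | succ m ih => simpa [add_smul] using hadd _ _ ih (heps i)
    | pred m ih => simpa [sub_eq_add_neg, add_smul] using hadd _ _ ih (hneg _ (heps i))
  intro α
  rw [← sum_smul_epsZ α]
  exact Finset.sum_induction _ P hadd h0 (fun i _ => hsm (α i) i)

end AuxZ

section AuxE
variable {n : ℕ}

/-- skew exponent for commuting `K α` past `x j` -/
def fscal {n : ℕ} (α : Fin n → ℤ) (j : Fin n) : ℤ :=
  starForm α (epsZ j) - starForm (epsZ j) α + α j

lemma fscal_zero (j : Fin n) : fscal 0 j = 0 := by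
  simp [fscal, starForm_zero_left, starForm_zero_right]

lemma fscal_add (u v : Fin n → ℤ) (j : Fin n) :
    fscal (u + v) j = fscal u j + fscal v j := by
  simp [fscal, starForm_add_left, starForm_add_right]; ring

lemma fscal_neg (u : Fin n → ℤ) (j : Fin n) : fscal (-u) j = -fscal u j := by
  simp [fscal, starForm_neg_left, starForm_neg_right]; ring

/-- total exponent in the integral coefficients -/
def Efun (ℓ : ℕ) {n : ℕ} (v : Fin n → ℤ) : ℤ :=
  starForm v (fun _ => (ℓ : ℤ) - 1) - starForm (fun _ => (ℓ : ℤ) - 1) v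
    + ∑ i, v i * ((ℓ : ℤ) - 1)

lemma Efun_add (ℓ : ℕ) (u v : Fin n → ℤ) :
    Efun ℓ (u + v) = Efun ℓ u + Efun ℓ v := by
  simp [Efun, starForm_add_left, starForm_add_right, add_mul,
    Finset.sum_add_distrib]
  ring

lemma starForm_dvd_left {ℓ : ℕ} {w : Fin n → ℤ} (h : ∀ i, (ℓ : ℤ) ∣ w i)
    (v : Fin n → ℤ) : (ℓ : ℤ) ∣ starForm w v := by
  refine Finset.dvd_sum fun j _ => Finset.dvd_sum fun i _ => ?_
  split_ifs
  · exact Dvd.dvd.mul_right (h i) _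
  · exact dvd_zero _

lemma starForm_dvd_right {ℓ : ℕ} {w : Fin n → ℤ} (h : ∀ i, (ℓ : ℤ) ∣ w i)
    (v : Fin n → ℤ) : (ℓ : ℤ) ∣ starForm v w := by
  refine Finset.dvd_sum fun j _ => Finset.dvd_sum fun i _ => ?_
  split_ifs
  · exact Dvd.dvd.mul_left (h j) _
  · exact dvd_zero _

lemma Efun_sub_dvd (ℓ : ℕ) {u v : Fin n → ℤ} (h : ∀ i, (ℓ : ℤ) ∣ u i - v i) :
    (ℓ : ℤ) ∣ Efun ℓ u - Efun ℓ v := by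
  have key : Efun ℓ u - Efun ℓ v = Efun ℓ (u - v) := by
    have : u = (u - v) + v := by ring
    rw [this, Efun_add]; ring
  rw [key]
  have h' : ∀ i, (ℓ : ℤ) ∣ (u - v) i := fun i => h i
  refine dvd_add (dvd_sub (starForm_dvd_left h' _) (starForm_dvd_right h' _)) ?_
  exact Finset.dvd_sum fun i _ => Dvd.dvd.mul_right (h' i) _

lemma starForm_epsZ_right (v : Fin n → ℤ) (j : Fin n) :
    starForm v (epsZ j) = ∑ i : Fin n, if (j : ℕ) < (i : ℕ) then v i else 0 := by
  unfold starForm epsZ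
  rw [show (∑ j' : Fin n, ∑ i : Fin n,
      if (j' : ℕ) < (i : ℕ) then v i * (if j' = j then 1 else 0) else 0)
    = ∑ j' : Fin n, if j' = j then (∑ i : Fin n, if (j' : ℕ) < (i : ℕ) then v i else 0) else 0 from ?_]
  · rw [Finset.sum_ite_eq' Finset.univ j]; simp
  · refine Finset.sum_congr rfl fun j' _ => ?_
    split_ifs with h
    · subst h
      refine Finset.sum_congr rfl fun i _ => ?_
      split_ifs <;> simp
    · refine Finset.sum_eq_zero fun i _ => ?_
      split_ifs <;> simp [h]

lemma starForm_epsZ_left (v : Fin n → ℤ) (j : Fin n) :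
    starForm (epsZ j) v = ∑ i : Fin n, if (i : ℕ) < (j : ℕ) then v i else 0 := by
  unfold starForm epsZ
  rw [show (∑ j' : Fin n, ∑ i : Fin n,
      if (j' : ℕ) < (i : ℕ) then (if i = j then 1 else 0) * v j' else 0)
    = ∑ j' : Fin n, if (j' : ℕ) < (j : ℕ) then v j' else 0 from ?_]
  refine Finset.sum_congr rfl fun j' _ => ?_
  rw [show (∑ i : Fin n, if (j' : ℕ) < (i : ℕ) then (if i = j then 1 else 0) * v j' else 0)
    = ∑ i : Fin n, if i = j then (if (j' : ℕ) < (i : ℕ) then v j' else 0) else 0 from ?_]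
  · rw [Finset.sum_ite_eq' Finset.univ j]; simp
  · refine Finset.sum_congr rfl fun i _ => ?_
    split_ifs <;> simp_all

lemma starForm_const_right (v : Fin n → ℤ) (c : ℤ) :
    starForm v (fun _ => c) = ∑ j : Fin n, c * ∑ i : Fin n, (if (j : ℕ) < (i : ℕ) then v i else 0) := by
  unfold starForm
  refine Finset.sum_congr rfl fun j _ => ?_
  rw [Finset.mul_sum]
  refine Finset.sum_congr rfl fun i _ => ?_
  split_ifs <;> ring

lemma starForm_const_left (v : Fin n → ℤ) (c : ℤ) :
    starForm (fun _ => c) v = ∑ j : Fin n, c * ∑ i : Fin n, (if (i : ℕ) < (j : ℕ) then v i else 0) := by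
  unfold starForm
  rw [Finset.sum_comm]
  refine Finset.sum_congr rfl fun j _ => ?_
  rw [Finset.mul_sum]
  refine Finset.sum_congr rfl fun i _ => ?_
  split_ifs <;> ring

lemma Csum_eq (ℓ : ℕ) (hℓ : 1 ≤ ℓ) (v : Fin n → ℤ) :
    ∑ j, ((ℓ - 1 : ℕ) : ℤ) * fscal v j = Efun ℓ v := by
  have hc : ((ℓ - 1 : ℕ) : ℤ) = (ℓ : ℤ) - 1 := by
    push_cast [Nat.cast_sub hℓ]; ring
  rw [hc]
  unfold Efun fscal
  rw [starForm_const_right, starForm_const_left, ← Finset.sum_sub_distrib,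
    ← Finset.sum_add_distrib]
  refine Finset.sum_congr rfl fun j _ => ?_
  rw [starForm_epsZ_right, starForm_epsZ_left]
  ring

end AuxE



/-- The element `Γ = x^κ Σ_α θ(α,κ) q^{⟨α,κ⟩} K(α)`, `κ = (ℓ-1,…,ℓ-1)`. -/
noncomputable def Gam {k : Type*} [Field k] {A : Type*} [Ring A] [HopfAlgebra k A]
    {n ℓ : ℕ} {q t : k} (T : TaftPresentation k A n ℓ q t) : A :=
  xpow T.x (fun _ => ℓ - 1) *
    ∑ α : Fin n → Fin ℓ,
      (theta t (fun i => ((α i : ℕ) : ℤ)) (fun _ => (ℓ : ℤ) - 1) *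
        q ^ (∑ i, (α i : ℕ) * (ℓ - 1))) • T.K (fun i => ((α i : ℕ) : ℤ))


section MainAux

variable {k : Type*} [Field k] {A : Type*} [Ring A] [HopfAlgebra k A]
  {n ℓ : ℕ} {q : k}

namespace TaftPresentation

variable (T : TaftPresentation k A n ℓ q q)

lemma K_pow (α : Fin n → ℤ) : ∀ m : ℕ, T.K α ^ m = T.K ((m : ℤ) • α) := by
  intro m
  induction m with
  | zero => simp [T.K_zero]
  | succ m ih =>
      rw [pow_succ, ih, T.K_add]
      congr 1
      push_cast
      rw [add_smul, one_smul]

lemma K_ell_smul : ∀ w : Fin n → ℤ, T.K ((ℓ : ℤ) • w) = 1 := by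
  refine genInduction _ ?_ ?_ ?_ ?_
  · rw [smul_zero, T.K_zero]
  · intro u v hu hv
    rw [smul_add, ← T.K_add, hu, hv, one_mul]
  · intro u hu
    have h2 : T.K (-((ℓ : ℤ) • u)) * T.K ((ℓ : ℤ) • u) = 1 := by
      rw [T.K_add, neg_add_cancel, T.K_zero]
    rw [hu, mul_one] at h2
    rw [smul_neg]
    exact h2
  · intro i
    have h := T.K_ell i
    rwa [T.K_pow] at h

lemma K_mod (u v : Fin n → ℤ) (h : ∀ i, (ℓ : ℤ) ∣ u i - v i) : T.K u = T.K v := by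
  have hw : u = v + (ℓ : ℤ) • (fun i => (u i - v i) / ℓ) := by
    funext i
    have h2 := Int.ediv_mul_cancel (h i)
    simp only [Pi.add_apply, Pi.smul_apply, smul_eq_mul]
    linarith [h2]
  rw [hw, ← T.K_add, T.K_ell_smul, mul_one]

lemma K_neg_mul (u : Fin n → ℤ) : T.K (-u) * T.K u = 1 := by
  rw [T.K_add, neg_add_cancel, T.K_zero]

lemma K_mul_neg (u : Fin n → ℤ) : T.K u * T.K (-u) = 1 := by
  rw [T.K_add, add_neg_cancel, T.K_zero]

lemma K_x_gen (hqn : q ≠ 0) : ∀ (α : Fin n → ℤ) (j : Fin n),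
    T.K α * T.x j = q ^ fscal α j • (T.x j * T.K α) := by
  have main : ∀ (α : Fin n → ℤ), ∀ (j : Fin n),
      T.K α * T.x j = q ^ fscal α j • (T.x j * T.K α) := by
    refine genInduction _ ?_ ?_ ?_ ?_
    · intro j
      simp [T.K_zero, fscal_zero]
    · intro u v hu hv j
      have h1 : T.K (u + v) = T.K u * T.K v := (T.K_add u v).symm
      calc T.K (u + v) * T.x j = T.K u * (T.K v * T.x j) := by rw [h1, mul_assoc]
        _ = T.K u * (q ^ fscal v j • (T.x j * T.K v)) := by rw [hv j]
        _ = q ^ fscal v j • (T.K u * T.x j * T.K v) := by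
            rw [mul_smul_comm, mul_assoc]
        _ = q ^ fscal v j • ((q ^ fscal u j • (T.x j * T.K u)) * T.K v) := by rw [hu j]
        _ = (q ^ fscal v j * q ^ fscal u j) • (T.x j * (T.K u * T.K v)) := by
            rw [smul_mul_assoc, smul_smul, mul_assoc]
        _ = q ^ fscal (u + v) j • (T.x j * T.K (u + v)) := by
            rw [← zpow_add₀ hqn, add_comm (fscal v j), ← fscal_add, h1]
    · intro u hu j
      have hc : (q : k) ^ fscal u j ≠ 0 := zpow_ne_zero _ hqn
      have hinv : T.x j * T.K u = (q ^ fscal u j)⁻¹ • (T.K u * T.x j) := by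
        rw [hu j, smul_smul, inv_mul_cancel₀ hc, one_smul]
      calc T.K (-u) * T.x j
          = T.K (-u) * (T.x j * (T.K u * T.K (-u))) := by rw [T.K_mul_neg, mul_one]
        _ = T.K (-u) * ((T.x j * T.K u) * T.K (-u)) := by rw [mul_assoc]
        _ = T.K (-u) * (((q ^ fscal u j)⁻¹ • (T.K u * T.x j)) * T.K (-u)) := by rw [hinv]
        _ = (q ^ fscal u j)⁻¹ • ((T.K (-u) * T.K u) * (T.x j * T.K (-u))) := by
            simp only [smul_mul_assoc, mul_smul_comm, mul_assoc]
        _ = q ^ fscal (-u) j • (T.x j * T.K (-u)) := by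
            rw [T.K_neg_mul, one_mul, fscal_neg, zpow_neg]
    · intro i j
      rw [T.K_x i j]
      congr 1
      unfold theta fscal epsZ
      by_cases h : i = j
      · subst h
        simp
      · rw [if_neg h, if_neg (Ne.symm h), mul_one, add_zero]
  exact main

lemma K_x_pow (hqn : q ≠ 0) (α : Fin n → ℤ) (j : Fin n) :
    ∀ m : ℕ, T.K α * T.x j ^ m = q ^ ((m : ℤ) * fscal α j) • (T.x j ^ m * T.K α) := by
  intro m
  induction m with
  | zero => simp
  | succ m ih =>
      calc T.K α * T.x j ^ (m + 1)
          = (T.K α * T.x j ^ m) * T.x j := by rw [pow_succ, mul_assoc]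
        _ = q ^ ((m : ℤ) * fscal α j) • (T.x j ^ m * (T.K α * T.x j)) := by
            rw [ih, smul_mul_assoc, mul_assoc]
        _ = q ^ ((m : ℤ) * fscal α j) • (T.x j ^ m * (q ^ fscal α j • (T.x j * T.K α))) := by
            rw [T.K_x_gen hqn]
        _ = (q ^ ((m : ℤ) * fscal α j) * q ^ fscal α j) • (T.x j ^ (m + 1) * T.K α) := by
            rw [mul_smul_comm, smul_smul, pow_succ, mul_assoc]
        _ = q ^ (((m : ℕ) + 1 : ℤ) * fscal α j) • (T.x j ^ (m + 1) * T.K α) := by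
            rw [← zpow_add₀ hqn]
            congr 1
            ring
        _ = q ^ (((m + 1 : ℕ) : ℤ) * fscal α j) • (T.x j ^ (m + 1) * T.K α) := by
            norm_num

lemma K_xpow_list (hqn : q ≠ 0) (α : Fin n → ℤ) (γ : Fin n → ℕ) :
    ∀ L : List (Fin n),
      T.K α * (L.map (fun j => T.x j ^ γ j)).prod
        = q ^ ((L.map (fun j => (γ j : ℤ) * fscal α j)).sum)
            • ((L.map (fun j => T.x j ^ γ j)).prod * T.K α) := by
  intro L
  induction L with
  | nil => simp
  | cons j L ih =>
      simp only [List.map_cons, List.prod_cons, List.sum_cons]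
      calc T.K α * (T.x j ^ γ j * (L.map (fun j => T.x j ^ γ j)).prod)
          = (T.K α * T.x j ^ γ j) * (L.map (fun j => T.x j ^ γ j)).prod := by
            rw [mul_assoc]
        _ = q ^ ((γ j : ℤ) * fscal α j) •
              (T.x j ^ γ j * (T.K α * (L.map (fun j => T.x j ^ γ j)).prod)) := by
            rw [T.K_x_pow hqn, smul_mul_assoc, mul_assoc]
        _ = (q ^ ((γ j : ℤ) * fscal α j) *
              q ^ ((L.map (fun j => (γ j : ℤ) * fscal α j)).sum)) •
              (T.x j ^ γ j * ((L.map (fun j => T.x j ^ γ j)).prod * T.K α)) := by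
            rw [ih, mul_smul_comm, smul_smul]
        _ = _ := by
            rw [← zpow_add₀ hqn, mul_assoc]

lemma K_xpow (hqn : q ≠ 0) (α : Fin n → ℤ) (γ : Fin n → ℕ) :
    T.K α * xpow T.x γ
      = q ^ (∑ j, (γ j : ℤ) * fscal α j) • (xpow T.x γ * T.K α) := by
  have h := T.K_xpow_list hqn α γ (List.finRange n)
  rw [Fin.sum_univ_def]
  exact h

lemma x_x_pow (i j : Fin n) :
    ∀ m : ℕ, T.x i * T.x j ^ m
      = (theta q (epsZ i) (epsZ j)) ^ m • (T.x j ^ m * T.x i) := by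
  intro m
  induction m with
  | zero => simp
  | succ m ih =>
      calc T.x i * T.x j ^ (m + 1)
          = (T.x i * T.x j ^ m) * T.x j := by rw [pow_succ, mul_assoc]
        _ = (theta q (epsZ i) (epsZ j)) ^ m • (T.x j ^ m * (T.x i * T.x j)) := by
            rw [ih, smul_mul_assoc, mul_assoc]
        _ = (theta q (epsZ i) (epsZ j)) ^ m •
              (T.x j ^ m * (theta q (epsZ i) (epsZ j) • (T.x j * T.x i))) := by
            rw [T.x_x i j]
        _ = ((theta q (epsZ i) (epsZ j)) ^ m * theta q (epsZ i) (epsZ j)) •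
              (T.x j ^ (m + 1) * T.x i) := by
            rw [mul_smul_comm, smul_smul, pow_succ, mul_assoc]
        _ = _ := by rw [← pow_succ]

lemma x_kill (hℓ : 1 ≤ ℓ) (i : Fin n) :
    ∀ L : List (Fin n), i ∈ L →
      T.x i * (L.map (fun j => T.x j ^ (ℓ - 1))).prod = 0 := by
  intro L
  induction L with
  | nil => intro h; simp at h
  | cons j L ih =>
      intro h
      simp only [List.map_cons, List.prod_cons]
      by_cases hij : i = j
      · subst hij
        rw [← mul_assoc]
        have h1 : T.x i * T.x i ^ (ℓ - 1) = T.x i ^ ℓ := by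
          rw [← pow_succ']
          congr 1
          omega
        rw [h1, T.x_ell, zero_mul]
      · have hmem : i ∈ L := by
          rcases List.mem_cons.mp h with h' | h'
          · exact absurd h' hij
          · exact h'
        rw [← mul_assoc, T.x_x_pow i j, smul_mul_assoc, mul_assoc, ih hmem,
          mul_zero, smul_zero]

end TaftPresentation

lemma x_Gam (T : TaftPresentation k A n ℓ q q) (hℓ : 1 ≤ ℓ) (i : Fin n) :
    T.x i * Gam T = 0 := by
  unfold Gam
  rw [← mul_assoc]
  have h0 : T.x i * xpow T.x (fun _ => ℓ - 1) = 0 := by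
    have := T.x_kill hℓ i (List.finRange n) (List.mem_finRange i)
    exact this
  rw [h0, zero_mul]

lemma K_Gam (T : TaftPresentation k A n ℓ q q) (hq : IsPrimitiveRoot q ℓ)
    (hℓ : 1 < ℓ) (α : Fin n → Fin ℓ) :
    T.K (fun i => ((α i : ℕ) : ℤ)) * Gam T = Gam T := by
  haveI : NeZero ℓ := ⟨by omega⟩
  have hqn : q ≠ 0 := hq.ne_zero (by omega)
  have hql : (q : k) ^ (ℓ : ℤ) = 1 := by
    rw [zpow_natCast]; exact hq.pow_eq_one
  have Qmod : ∀ a b : ℤ, (ℓ : ℤ) ∣ a - b → q ^ a = q ^ b := by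
    rintro a b ⟨t, ht⟩
    have hab : a = b + (ℓ : ℤ) * t := by linarith
    rw [hab, zpow_add₀ hqn, zpow_mul, hql, one_zpow, mul_one]
  set S : A := ∑ β : Fin n → Fin ℓ,
      (theta q (fun i => ((β i : ℕ) : ℤ)) (fun _ => (ℓ : ℤ) - 1) *
        q ^ (∑ i, (β i : ℕ) * (ℓ - 1))) • T.K (fun i => ((β i : ℕ) : ℤ)) with hS
  have hGam : Gam T = xpow T.x (fun _ => ℓ - 1) * S := rfl
  have coef_eq : ∀ β : Fin n → Fin ℓ,
      theta q (fun i => ((β i : ℕ) : ℤ)) (fun _ => (ℓ : ℤ) - 1) *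
        q ^ (∑ i, (β i : ℕ) * (ℓ - 1))
      = q ^ Efun ℓ (fun i => ((β i : ℕ) : ℤ)) := by
    intro β
    unfold theta Efun
    rw [← zpow_natCast q (∑ i, (β i : ℕ) * (ℓ - 1)), ← zpow_add₀ hqn]
    congr 1
    push_cast [Nat.cast_sub (by omega : 1 ≤ ℓ)]
    ring
  have hdvd : ∀ β : Fin n → Fin ℓ, ∀ i,
      (ℓ : ℤ) ∣ ((fun i => ((α i : ℕ) : ℤ)) + fun i => ((β i : ℕ) : ℤ)) i
        - (fun i => (((β + α) i : ℕ) : ℤ)) i := by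
    intro β i
    simp only [Pi.add_apply]
    have hval : (((β i + α i : Fin ℓ) : ℕ)) = ((β i : ℕ) + (α i : ℕ)) % ℓ :=
      Fin.val_add _ _
    rw [hval]
    set a : ℤ := ((β i : ℕ) : ℤ) + ((α i : ℕ) : ℤ) with ha
    have hcast : ((((β i : ℕ) + (α i : ℕ)) % ℓ : ℕ) : ℤ) = a % (ℓ : ℤ) := by
      push_cast
      ring_nf
      rw [ha]
    rw [hcast]
    refine ⟨a / ℓ, ?_⟩
    have := Int.mul_ediv_add_emod a (ℓ : ℤ)
    linarith
  have step2 : q ^ Efun ℓ (fun i => ((α i : ℕ) : ℤ)) •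
      (T.K (fun i => ((α i : ℕ) : ℤ)) * S) = S := by
    rw [hS, Finset.mul_sum, Finset.smul_sum]
    have point : ∀ β : Fin n → Fin ℓ,
        q ^ Efun ℓ (fun i => ((α i : ℕ) : ℤ)) •
          (T.K (fun i => ((α i : ℕ) : ℤ)) *
            ((theta q (fun i => ((β i : ℕ) : ℤ)) (fun _ => (ℓ : ℤ) - 1) *
              q ^ (∑ i, (β i : ℕ) * (ℓ - 1))) • T.K (fun i => ((β i : ℕ) : ℤ))))
        = (theta q (fun i => (((β + α) i : ℕ) : ℤ)) (fun _ => (ℓ : ℤ) - 1) *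
            q ^ (∑ i, ((β + α) i : ℕ) * (ℓ - 1))) •
              T.K (fun i => (((β + α) i : ℕ) : ℤ)) := by
      intro β
      rw [coef_eq β, coef_eq (β + α), mul_smul_comm, smul_smul, ← zpow_add₀ hqn,
        T.K_add, ← Efun_add, Qmod _ _ (Efun_sub_dvd ℓ (hdvd β)),
        T.K_mod _ _ (hdvd β)]
    rw [Finset.sum_congr rfl (fun β _ => point β)]
    exact Fintype.sum_equiv (Equiv.addRight α) _ _ (fun β => rfl)
  calc T.K (fun i => ((α i : ℕ) : ℤ)) * Gam T
      = (T.K (fun i => ((α i : ℕ) : ℤ)) * xpow T.x (fun _ => ℓ - 1)) * S := by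
        rw [hGam, mul_assoc]
    _ = q ^ (∑ j, (((fun _ => ℓ - 1 : Fin n → ℕ) j : ℤ)) * fscal (fun i => ((α i : ℕ) : ℤ)) j) •
          (xpow T.x (fun _ => ℓ - 1) *
            (T.K (fun i => ((α i : ℕ) : ℤ)) * S)) := by
        rw [T.K_xpow hqn, smul_mul_assoc, mul_assoc]
    _ = xpow T.x (fun _ => ℓ - 1) *
          (q ^ Efun ℓ (fun i => ((α i : ℕ) : ℤ)) •
            (T.K (fun i => ((α i : ℕ) : ℤ)) * S)) := by
        rw [mul_smul_comm]
        congr 2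
        exact Csum_eq ℓ (by omega) _
    _ = Gam T := by rw [step2, hGam]

end MainAux

/-- `Γ` is a nonzero left integral of the `n`-rank Taft algebra. -/
theorem stmt9 {k : Type*} [Field k] [CharZero k] [IsAlgClosed k]
    {A : Type*} [Ring A] [HopfAlgebra k A] {n ℓ : ℕ} {q : k}
    (hq : IsPrimitiveRoot q ℓ) (hℓ : 1 < ℓ)
    (T : TaftPresentation k A n ℓ q q)
    (b : Module.Basis ((Fin n → Fin ℓ) × (Fin n → Fin ℓ)) k A)
    (hb : ∀ p, b p = T.mono p.1 p.2) :
    Gam T ≠ 0 ∧ ∀ h : A, h * Gam T = Coalgebra.counit (R := k) h • Gam T := by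
  haveI : NeZero ℓ := ⟨by omega⟩
  have hqn : q ≠ 0 := hq.ne_zero (by omega)
  constructor
  · -- nonzero
    set κF : Fin n → Fin ℓ := fun _ => (⟨ℓ - 1, by omega⟩ : Fin ℓ) with hκF
    set c : (Fin n → Fin ℓ) → k := fun β =>
      theta q (fun i => ((β i : ℕ) : ℤ)) (fun _ => (ℓ : ℤ) - 1) *
        q ^ (∑ i, (β i : ℕ) * (ℓ - 1)) with hc
    have hrepr : Gam T = ∑ β : Fin n → Fin ℓ, c β • b (κF, β) := by
      unfold Gam
      rw [Finset.mul_sum]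
      refine Finset.sum_congr rfl fun β _ => ?_
      rw [mul_smul_comm, hb (κF, β)]
      rfl
    intro h0
    have h1 : (b.repr (Gam T)) (κF, (0 : Fin n → Fin ℓ)) = c 0 := by
      rw [hrepr, map_sum]
      simp only [map_smul, Module.Basis.repr_self]
      rw [Finsupp.finset_sum_apply]
      have : ∀ β : Fin n → Fin ℓ,
          ((c β • (Finsupp.single ((κF, β) : (Fin n → Fin ℓ) × (Fin n → Fin ℓ)) (1 : k)))
              (κF, (0 : Fin n → Fin ℓ)))
          = if β = 0 then c β else 0 := by
        intro β
        rw [Finsupp.smul_apply, Finsupp.single_apply]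
        by_cases hβ : β = 0
        · subst hβ; simp
        · rw [if_neg (by simp [hβ]), if_neg hβ, smul_zero]
      rw [Finset.sum_congr rfl fun β _ => this β, Finset.sum_ite_eq' Finset.univ]
      simp
    rw [h0, map_zero, Finsupp.zero_apply] at h1
    have h2 : c 0 ≠ 0 := by
      refine mul_ne_zero ?_ (pow_ne_zero _ hqn)
      unfold theta
      exact zpow_ne_zero _ hqn
    exact h2 h1.symm
  · -- left integral
    set P : A → Prop := fun h => h * Gam T = Coalgebra.counit (R := k) h • Gam T with hP
    have hone : P 1 := by
      simp only [hP, one_mul, Bialgebra.counit_one, one_smul]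
    have hmul : ∀ a b : A, P a → P b → P (a * b) := by
      intro a b ha hb'
      simp only [hP] at *
      rw [mul_assoc, hb', mul_smul_comm, ha, smul_smul, Bialgebra.counit_mul,
        mul_comm (Coalgebra.counit (R := k) a)]
    have hpow : ∀ (a : A), P a → ∀ m : ℕ, P (a ^ m) := by
      intro a ha m
      induction m with
      | zero => simpa using hone
      | succ m ih => rw [pow_succ]; exact hmul _ _ ih ha
    have hlist : ∀ L : List A, (∀ a ∈ L, P a) → P L.prod := by
      intro L
      induction L with
      | nil => intro _; simpa using hone
      | cons a L ih =>
          intro h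
          rw [List.prod_cons]
          exact hmul _ _ (h a List.mem_cons_self)
            (ih fun x hx => h x (List.mem_cons_of_mem a hx))
    have hx : ∀ i : Fin n, P (T.x i) := by
      intro i
      simp only [hP]
      rw [x_Gam T (by omega) i, T.counit_x, zero_smul]
    have hK : ∀ β : Fin n → Fin ℓ, P (T.K (fun i => ((β i : ℕ) : ℤ))) := by
      intro β
      simp only [hP]
      rw [K_Gam T hq hℓ β, T.counit_K, one_smul]
    have hmono : ∀ p : (Fin n → Fin ℓ) × (Fin n → Fin ℓ), P (T.mono p.1 p.2) := by
      rintro ⟨γ, β⟩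
      unfold TaftPresentation.mono xpow
      refine hmul _ _ ?_ (hK β)
      refine hlist _ fun a ha => ?_
      rw [List.mem_map] at ha
      obtain ⟨i, _, rfl⟩ := ha
      exact hpow _ (hx i) _
    have hzero : P 0 := by
      simp only [hP, zero_mul, map_zero, zero_smul]
    have hadd : ∀ a b : A, P a → P b → P (a + b) := by
      intro a b ha hb'
      simp only [hP] at *
      rw [add_mul, ha, hb', map_add, add_smul]
    have hsmul : ∀ (r : k) (a : A), P a → P (r • a) := by
      intro r a ha
      simp only [hP] at *
      rw [smul_mul_assoc, ha, map_smul, smul_assoc]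
    intro h
    have hmem : h ∈ Submodule.span k (Set.range b) := by
      rw [b.span_eq]; trivial
    refine Submodule.span_induction (p := fun x _ => P x) ?_ hzero
      (fun x y _ _ => hadd x y) (fun r x _ => hsmul r x) hmem
    rintro x ⟨p, rfl⟩
    rw [hb p]
    exact hmono p
end

section
/- For the left integral Γ = x^κ Σ_α θ(α,κ) q^{⟨α,κ⟩} K(α) of the n-rank Taft algebra, one has Γ·h = χ̃(h)·Γ for all h, where χ̃ is the algebra homomorphism with χ̃(x^η K(β)) = δ_{η,0} θ(β,𝟏) q^{⟨β,𝟏⟩}; i.e., the distinguished group-like element of 𝒜̄_q(n)* is κ̃(𝟏). -/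
open scoped TensorProduct

section SF
variable {n : ℕ} (a b c : Fin n → ℤ) (m : ℤ)

lemma sf_addl : starForm (a + b) c = starForm a c + starForm b c := by
  unfold starForm
  rw [← Finset.sum_add_distrib]
  refine Finset.sum_congr rfl fun j _ => ?_
  rw [← Finset.sum_add_distrib]
  refine Finset.sum_congr rfl fun i _ => ?_
  split <;> simp [add_mul]

lemma sf_subl : starForm (a - b) c = starForm a c - starForm b c := by
  unfold starForm
  rw [← Finset.sum_sub_distrib]
  refine Finset.sum_congr rfl fun j _ => ?_
  rw [← Finset.sum_sub_distrib]
  refine Finset.sum_congr rfl fun i _ => ?_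
  split <;> simp [sub_mul]

lemma sf_smull : starForm (m • a) c = m * starForm a c := by
  unfold starForm
  rw [Finset.mul_sum]
  refine Finset.sum_congr rfl fun j _ => ?_
  rw [Finset.mul_sum]
  refine Finset.sum_congr rfl fun i _ => ?_
  split <;> simp <;> ring

lemma sf_addr : starForm c (a + b) = starForm c a + starForm c b := by
  unfold starForm
  rw [← Finset.sum_add_distrib]
  refine Finset.sum_congr rfl fun j _ => ?_
  rw [← Finset.sum_add_distrib]
  refine Finset.sum_congr rfl fun i _ => ?_
  split <;> simp [mul_add]

lemma sf_subr : starForm c (a - b) = starForm c a - starForm c b := by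
  unfold starForm
  rw [← Finset.sum_sub_distrib]
  refine Finset.sum_congr rfl fun j _ => ?_
  rw [← Finset.sum_sub_distrib]
  refine Finset.sum_congr rfl fun i _ => ?_
  split <;> simp [mul_sub]

lemma sf_smulr : starForm c (m • a) = m * starForm c a := by
  unfold starForm
  rw [Finset.mul_sum]
  refine Finset.sum_congr rfl fun j _ => ?_
  rw [Finset.mul_sum]
  refine Finset.sum_congr rfl fun i _ => ?_
  split <;> simp <;> ring

end SF

section Generic
variable {k : Type*} [Field k] {A : Type*} [Ring A] [Algebra k A]

lemma powP {a y : A} {c : k} (h : a * y = c • (y * a)) :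
    ∀ m : ℕ, a ^ m * y = c ^ m • (y * a ^ m) := by
  intro m
  induction m with
  | zero => simp
  | succ m ih =>
    rw [pow_succ, mul_assoc, h, mul_smul_comm, ← mul_assoc, ih, smul_mul_assoc, smul_smul,
      mul_assoc, pow_succ, mul_comm (c ^ m) c]

lemma prodP (y : A) : ∀ L : List A,
    (∀ a ∈ L, ∃ s : k, a * y = s • (y * a)) →
    ∃ s : k, L.prod * y = s • (y * L.prod) := by
  intro L
  induction L with
  | nil => intro _; exact ⟨1, by simp⟩
  | cons a L ih =>
    intro hmem
    obtain ⟨s, hs⟩ := ih (fun b hb => hmem b (List.mem_cons_of_mem _ hb))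
    obtain ⟨u, hu⟩ := hmem a List.mem_cons_self
    refine ⟨u * s, ?_⟩
    rw [List.prod_cons, mul_assoc, hs, mul_smul_comm, ← mul_assoc, hu, smul_mul_assoc,
      smul_smul, mul_assoc, mul_comm s u]

end Generic



section Helpers

lemma listPiSum {ι τ : Type*} (L : List ι) (g : ι → (τ → ℤ)) (i : τ) :
    ((L.map g).sum) i = (L.map (fun j => g j i)).sum := by
  induction L with
  | nil => rfl
  | cons a L ih => simp [ih]

end Helpers


namespace TaftPresentation

variable {k : Type*} [Field k] {A : Type*} [Ring A] [HopfAlgebra k A]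
  {n ℓ : ℕ} {q t : k} (T : TaftPresentation k A n ℓ q t)

lemma Kpow (j : Fin n) (m : ℕ) : T.K (epsZ j) ^ m = T.K ((m : ℤ) • epsZ j) := by
  induction m with
  | zero => simpa using T.K_zero.symm
  | succ m ih =>
    rw [pow_succ, ih, T.K_add]
    congr 1
    funext i
    simp only [Pi.add_apply, Pi.smul_apply, epsZ, smul_eq_mul, mul_ite, mul_one, mul_zero]
    split <;> push_cast <;> ring

lemma Klist (g : Fin n → (Fin n → ℤ)) : ∀ L : List (Fin n),
    ((L.map fun j => T.K (g j)).prod) = T.K ((L.map g).sum) := by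
  intro L
  induction L with
  | nil => simpa using T.K_zero.symm
  | cons a L ih => simp [ih, T.K_add]

lemma Kofnat (β : Fin n → ℕ) :
    T.K (fun i => (β i : ℤ)) =
      ((List.finRange n).map fun j => T.K (epsZ j) ^ β j).prod := by
  have h1 : (fun j => T.K (epsZ j) ^ β j) = fun j => T.K ((β j : ℤ) • epsZ j) :=
    funext fun j => T.Kpow j (β j)
  rw [h1, Klist]
  congr 1
  funext i
  rw [listPiSum]
  have : ((List.finRange n).map fun j => ((β j : ℤ) • epsZ j) i).sum
      = ∑ j : Fin n, ((β j : ℤ) • epsZ j) i := (Fin.sum_univ_def _).symm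
  rw [this]
  simp [epsZ, mul_ite]

lemma Kellmul (d : Fin n → ℕ) : T.K (fun i => ((ℓ * d i : ℕ) : ℤ)) = 1 := by
  rw [T.Kofnat]
  have : ∀ j ∈ List.finRange n, (fun j => T.K (epsZ j) ^ (ℓ * d j)) j = 1 := by
    intro j _
    simp only [pow_mul, T.K_ell, one_pow]
  rw [List.prod_eq_one]
  intro a ha
  obtain ⟨j, hj, rfl⟩ := List.mem_map.mp ha
  simp [pow_mul, T.K_ell]

lemma Kmod (v : Fin n → ℤ) (d : Fin n → ℕ) :
    T.K (fun i => v i + (ℓ : ℤ) * (d i : ℤ)) = T.K v := by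
  have h := T.K_add v (fun i => ((ℓ * d i : ℕ) : ℤ))
  rw [T.Kellmul, mul_one] at h
  rw [show (fun i => v i + (ℓ : ℤ) * (d i : ℤ)) = v + fun i => ((ℓ * d i : ℕ) : ℤ) from
    funext fun i => by simp only [Pi.add_apply]; push_cast; ring, ← h]

lemma Kx (β : Fin n → ℕ) (i : Fin n) :
    ∃ s : k, T.K (fun j => (β j : ℤ)) * T.x i = s • (T.x i * T.K (fun j => (β j : ℤ))) := by
  rw [T.Kofnat]
  apply prodP
  intro a ha
  obtain ⟨j, hj, rfl⟩ := List.mem_map.mp ha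
  exact ⟨_, powP (T.K_x j i) (β j)⟩

lemma xlist (hℓ : 0 < ℓ) : ∀ L : List (Fin n), ∀ i ∈ L,
    ((L.map fun j => T.x j ^ (ℓ - 1)).prod) * T.x i = 0 := by
  intro L
  induction L with
  | nil => intro i hi; simp at hi
  | cons a L ih =>
    intro i hi
    rw [List.map_cons, List.prod_cons, mul_assoc]
    by_cases hiL : i ∈ L
    · rw [ih i hiL, mul_zero]
    · have hia : i = a := by
        rcases List.mem_cons.mp hi with h | h
        · exact h
        · exact absurd h hiL
      subst hia
      obtain ⟨s, hs⟩ : ∃ s : k, ((L.map fun j => T.x j ^ (ℓ - 1)).prod) * T.x i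
          = s • (T.x i * (L.map fun j => T.x j ^ (ℓ - 1)).prod) := by
        apply prodP
        intro b hb
        obtain ⟨j, hj, rfl⟩ := List.mem_map.mp hb
        exact ⟨_, powP (T.x_x j i) (ℓ - 1)⟩
      rw [hs, mul_smul_comm, ← mul_assoc, ← pow_succ, Nat.sub_add_cancel hℓ, T.x_ell,
        zero_mul, smul_zero]

end TaftPresentation


section GamLemmas

variable {k : Type*} [Field k] {A : Type*} [Ring A] [HopfAlgebra k A]
  {n ℓ : ℕ} {q t : k}

lemma qcong (hq : IsPrimitiveRoot q ℓ) (hl : 0 < ℓ) (a b : ℤ)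
    (h : (ℓ : ℤ) ∣ (a - b)) : q ^ a = q ^ b := by
  have hq0 : q ≠ 0 := hq.ne_zero hl.ne'
  obtain ⟨c, hc⟩ := h
  have : a = b + (ℓ : ℤ) * c := by linarith
  rw [this, zpow_add₀ hq0, zpow_mul, zpow_natCast, hq.pow_eq_one, one_zpow, mul_one]

lemma Gamx (hℓ : 0 < ℓ) (T : TaftPresentation k A n ℓ q t) (i : Fin n) :
    Gam T * T.x i = 0 := by
  have hxκ : xpow T.x (fun _ => ℓ - 1) * T.x i = 0 :=
    T.xlist hℓ (List.finRange n) i (List.mem_finRange i)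
  rw [Gam, mul_assoc, Finset.sum_mul, Finset.mul_sum]
  refine Finset.sum_eq_zero fun β _ => ?_
  obtain ⟨s, hs⟩ := T.Kx (fun j => (β j : ℕ)) i
  rw [smul_mul_assoc, hs, smul_smul, mul_smul_comm, ← mul_assoc, hxκ, zero_mul, smul_zero]

lemma GamXpow (hℓ : 0 < ℓ) (T : TaftPresentation k A n ℓ q t) (γ : Fin n → ℕ) :
    ∀ L : List (Fin n), (∃ i ∈ L, γ i ≠ 0) →
      Gam T * ((L.map fun j => T.x j ^ γ j).prod) = 0 := by
  intro L
  induction L with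
  | nil => rintro ⟨i, hi, -⟩; simp at hi
  | cons a L ih =>
    rintro ⟨i, hi, hγi⟩
    rw [List.map_cons, List.prod_cons]
    by_cases ha : γ a = 0
    · have hiL : i ∈ L := by
        rcases List.mem_cons.mp hi with h | h
        · exact absurd (h ▸ ha) hγi
        · exact h
      rw [ha, pow_zero, one_mul]
      exact ih ⟨i, hiL, hγi⟩
    · have : T.x a ^ γ a = T.x a * T.x a ^ (γ a - 1) := by
        conv_lhs => rw [show γ a = 1 + (γ a - 1) by omega]
        rw [pow_add, pow_one]
      rw [this, mul_assoc, ← mul_assoc (Gam T), Gamx hℓ, zero_mul]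

lemma GamK (hq : IsPrimitiveRoot q ℓ) (hℓ : 1 < ℓ) (T : TaftPresentation k A n ℓ q q)
    (α : Fin n → Fin ℓ) :
    Gam T * T.K (fun i => ((α i : ℕ) : ℤ)) =
      (theta q (fun i => ((α i : ℕ) : ℤ)) (fun _ => (1 : ℤ)) * q ^ (∑ i, (α i : ℕ))) • Gam T := by
  haveI : NeZero ℓ := ⟨by omega⟩
  have hq0 : q ≠ 0 := hq.ne_zero (by omega)
  set χ : k := theta q (fun i => ((α i : ℕ) : ℤ)) (fun _ => (1 : ℤ)) * q ^ (∑ i, (α i : ℕ))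
    with hχ
  rw [Gam, mul_assoc, ← mul_smul_comm]
  congr 1
  rw [Finset.sum_mul, Finset.smul_sum]
  refine Fintype.sum_bijective (· + α) (Equiv.addRight α).bijective _ _ fun β => ?_
  set e : Fin n → ℕ := fun i => if (β i : ℕ) + (α i : ℕ) < ℓ then 0 else 1 with he
  have hval : ∀ i, (((β + α) i : ℕ) : ℤ)
      = ((β i : ℕ) : ℤ) + ((α i : ℕ) : ℤ) - (ℓ : ℤ) * (e i : ℤ) := by
    intro i
    have hβ := (β i).isLt
    have hα := (α i).isLt
    rw [he]
    simp only [Pi.add_apply, Fin.val_add]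
    by_cases h : (β i : ℕ) + (α i : ℕ) < ℓ
    · rw [Nat.mod_eq_of_lt h]
      simp [h]
    · have h2 : ((β i : ℕ) + (α i : ℕ)) % ℓ = (β i : ℕ) + (α i : ℕ) - ℓ := by
        rw [Nat.mod_eq_sub_mod (by omega)]
        exact Nat.mod_eq_of_lt (by omega)
      rw [h2]
      simp only [h, if_false]
      push_cast
      omega
  set u : Fin n → ℤ := fun i => ((β i : ℕ) : ℤ) with hu
  set v : Fin n → ℤ := fun i => ((α i : ℕ) : ℤ) with hv
  set w : Fin n → ℤ := fun i => ((e i : ℕ) : ℤ) with hw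
  set one1 : Fin n → ℤ := fun _ => (1 : ℤ) with hone
  have hvec2 : (fun i => (((β + α) i : ℕ) : ℤ)) = u + v - (ℓ : ℤ) • w := by
    funext i
    simp only [Pi.add_apply, Pi.sub_apply, Pi.smul_apply, smul_eq_mul, hu, hv, hw]
    exact hval i
  have hKeq : T.K (u + v) = T.K (fun i => (((β + α) i : ℕ) : ℤ)) := by
    rw [← T.Kmod (fun i => (((β + α) i : ℕ) : ℤ)) e]
    congr 1
    funext i
    simp only [Pi.add_apply, hu, hv]
    have := hval i
    simp only [Pi.add_apply] at this
    linarith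
  have κvec : (fun _ : Fin n => (ℓ : ℤ) - 1) = ((ℓ : ℤ) - 1) • one1 := by
    funext i; simp [hone]
  have hsum : ∀ μ : Fin n → Fin ℓ, ((∑ i, (μ i : ℕ) * (ℓ - 1) : ℕ) : ℤ)
      = (∑ i, ((μ i : ℕ) : ℤ)) * ((ℓ : ℤ) - 1) := by
    intro μ
    have hc1 : ((ℓ - 1 : ℕ) : ℤ) = (ℓ : ℤ) - 1 := by omega
    simp only [Nat.cast_sum, Nat.cast_mul, hc1, ← Finset.sum_mul]
  have hsumba : (∑ i, (((β + α) i : ℕ) : ℤ))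
      = (∑ i, u i) + (∑ i, v i) - (ℓ : ℤ) * (∑ i, w i) := by
    have : ∀ i, (((β + α) i : ℕ) : ℤ) = u i + v i - (ℓ : ℤ) * w i := by
      intro i
      have h1 := congrFun hvec2 i
      simpa using h1
    rw [Finset.sum_congr rfl fun i _ => this i]
    rw [Finset.sum_sub_distrib, Finset.sum_add_distrib, Finset.mul_sum]
  have hscal : theta q u (fun _ => (ℓ : ℤ) - 1) * q ^ (∑ i, (β i : ℕ) * (ℓ - 1))
      = χ * (theta q (fun i => (((β + α) i : ℕ) : ℤ)) (fun _ => (ℓ : ℤ) - 1)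
          * q ^ (∑ i, ((β + α) i : ℕ) * (ℓ - 1))) := by
    rw [hχ, hvec2, κvec]
    simp only [theta, ← zpow_natCast q, ← zpow_add₀ hq0, hsum, hsumba, hu, hv]
    apply qcong hq (by omega)
    simp only [sf_addl, sf_subl, sf_smull, sf_addr, sf_subr, sf_smulr, hsum β, hsum (β + α),
      hsumba, Nat.cast_sum]
    refine ⟨-(starForm v one1 - starForm one1 v) - (∑ i, v i)
      + ((ℓ : ℤ) - 1) * (starForm w one1 - starForm one1 w + ∑ i, w i), by ring⟩
  calc (theta q u (fun _ => (ℓ : ℤ) - 1) * q ^ (∑ i, (β i : ℕ) * (ℓ - 1))) • T.K u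
        * T.K v
      = (theta q u (fun _ => (ℓ : ℤ) - 1) * q ^ (∑ i, (β i : ℕ) * (ℓ - 1)))
          • T.K (u + v) := by rw [smul_mul_assoc, T.K_add]
    _ = (χ * (theta q (fun i => (((β + α) i : ℕ) : ℤ)) (fun _ => (ℓ : ℤ) - 1)
          * q ^ (∑ i, ((β + α) i : ℕ) * (ℓ - 1))))
          • T.K (fun i => (((β + α) i : ℕ) : ℤ)) := by rw [hKeq, hscal]
    _ = χ • ((theta q (fun i => (((β + α) i : ℕ) : ℤ)) (fun _ => (ℓ : ℤ) - 1)
          * q ^ (∑ i, ((β + α) i : ℕ) * (ℓ - 1)))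
          • T.K (fun i => (((β + α) i : ℕ) : ℤ))) := by rw [smul_smul]

end GamLemmas


/-- The distinguished group-like element `κ̃(𝟏)` of the dual, i.e. the linear
functional with `χ̃(x^η K(β)) = δ_{η,0} θ(β,𝟏) q^{⟨β,𝟏⟩}` on the monomial basis. -/
noncomputable def chiTilde {k : Type*} [Field k] {A : Type*} [Ring A] [HopfAlgebra k A]
    {n ℓ : ℕ} {q t : k} (T : TaftPresentation k A n ℓ q t)
    (b : Module.Basis ((Fin n → Fin ℓ) × (Fin n → Fin ℓ)) k A) : A →ₗ[k] k :=
  b.constr k (fun p =>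
    if ∀ i, (p.1 i : ℕ) = 0 then
      theta t (fun i => ((p.2 i : ℕ) : ℤ)) (fun _ => (1 : ℤ)) * q ^ (∑ i, (p.2 i : ℕ))
    else 0)

/-- `Γ h = χ̃(h) Γ` for all `h`, i.e. the distinguished group-like
element of `𝒜̄_q(n)*` is `κ̃(𝟏)`. -/
theorem stmt10 {k : Type*} [Field k] [CharZero k] [IsAlgClosed k]
    {A : Type*} [Ring A] [HopfAlgebra k A] {n ℓ : ℕ} {q : k}
    (hq : IsPrimitiveRoot q ℓ) (hℓ : 1 < ℓ)
    (T : TaftPresentation k A n ℓ q q)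
    (b : Module.Basis ((Fin n → Fin ℓ) × (Fin n → Fin ℓ)) k A)
    (hb : ∀ p, b p = T.mono p.1 p.2) :
    ∀ h : A, Gam T * h = chiTilde T b h • Gam T := by
  have hmap : LinearMap.mulLeft k (Gam T) = (chiTilde T b).smulRight (Gam T) := by
    apply b.ext
    intro p
    rw [LinearMap.mulLeft_apply, LinearMap.smulRight_apply, chiTilde, Module.Basis.constr_basis,
      hb p]
    by_cases h0 : ∀ i, (p.1 i : ℕ) = 0
    · rw [if_pos h0]
      have hx1 : xpow T.x (fun i => (p.1 i : ℕ)) = 1 := by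
        unfold xpow
        apply List.prod_eq_one
        intro a ha
        obtain ⟨j, hj, rfl⟩ := List.mem_map.mp ha
        simp [h0 j]
      rw [TaftPresentation.mono, hx1, one_mul]
      exact GamK hq hℓ T p.2
    · rw [if_neg h0, zero_smul]
      push_neg at h0
      obtain ⟨i, hi⟩ := h0
      rw [TaftPresentation.mono, ← mul_assoc]
      unfold xpow
      rw [GamXpow (by omega) T _ (List.finRange n) ⟨i, List.mem_finRange i, hi⟩, zero_mul]
  intro h
  have := LinearMap.congr_fun hmap h
  simpa [LinearMap.mulLeft_apply, LinearMap.smulRight_apply] using this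
end
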